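/- arXiv:1907.11473 — 11 statements merged into one kernel-verified Lean document; each statement's English description precedes it below -/
import Mathlib

section
/- Let n, m ∈ ℕ*, ℓ > 0, K, C ∈ ℝ^{m×n}, z ∈ ℝⁿ and j ∈ {1,…,m}. If |((K−C)z)_j| ≤ ℓ, then φ(Kz)_j · ( φ(Kz)_j + (Cz)_j ) ≤ 0. -/
open Matrix

/-- Componentwise saturation function with level `ℓ`. -/
noncomputable def satv {m : ℕ} (ℓ : ℝ) (v : Fin m → ℝ) : Fin m → ℝ :=
  fun k => if |v k| ≤ ℓ then v k else ℓ * v k / |v k|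

/-- Deadzone nonlinearity `φ(u) = sat(u) − u`. -/
noncomputable def deadzone {m : ℕ} (ℓ : ℝ) (u : Fin m → ℝ) : Fin m → ℝ :=
  fun k => satv ℓ u k - u k

theorem stmt0 (n m : ℕ) (hn : 0 < n) (hm : 0 < m) (ℓ : ℝ) (hℓ : 0 < ℓ)
    (K C : Matrix (Fin m) (Fin n) ℝ) (z : Fin n → ℝ) (j : Fin m)
    (h : |((K - C).mulVec z) j| ≤ ℓ) :
    deadzone ℓ (K.mulVec z) j * (deadzone ℓ (K.mulVec z) j + (C.mulVec z) j) ≤ 0 := by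
  set u := K.mulVec z j with hu
  set c := C.mulVec z j with hc
  have hdiff : |u - c| ≤ ℓ := by
    have : (K - C).mulVec z j = u - c := by simp [sub_mulVec, hu, hc]
    rwa [this] at h
  have hd1 := (abs_le.mp hdiff).1
  have hd2 := (abs_le.mp hdiff).2
  simp only [deadzone, satv]
  rw [← hu]
  by_cases hle : |u| ≤ ℓ
  · simp [hle]
  · simp only [hle, if_false]
    push_neg at hle
    rcases lt_or_ge 0 u with hpos | hneg
    · have habs : |u| = u := abs_of_pos hpos
      rw [habs]
      have hne : u ≠ 0 := ne_of_gt hpos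
      rw [mul_div_assoc, div_self hne, mul_one]
      have hℓu : ℓ < u := habs ▸ hle
      apply mul_nonpos_of_nonpos_of_nonneg <;> linarith
    · have hneg' : u < 0 := lt_of_le_of_ne hneg (by intro h0; rw [h0] at hle; simp at hle; linarith)
      have habs : |u| = -u := abs_of_neg hneg'
      rw [habs]
      have hne : u ≠ 0 := ne_of_lt hneg'
      have : ℓ * u / -u = -ℓ := by rw [div_neg, mul_div_assoc, div_self hne, mul_one]
      rw [this]
      have hℓu : ℓ < -u := habs ▸ hle
      apply mul_nonpos_of_nonneg_of_nonpos <;> linarith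
end

section
/- Let n, m ∈ ℕ*, ℓ > 0, K, C ∈ ℝ^{m×n}, let D ∈ ℝ^{m×m} be a diagonal matrix with positive diagonal entries, and let z ∈ ℝⁿ satisfy |((K−C)z)_j| ≤ ℓ for every j ∈ {1,…,m}. Then φ(Kz)ᵀ D ( φ(Kz) + Cz ) ≤ 0. -/
open Matrix

lemma dz_key (ℓ u c : ℝ) (hℓ : 0 < ℓ) (h : |u - c| ≤ ℓ) :
    (if |u| ≤ ℓ then u else ℓ * u / |u|) - u ≤ 0 ∨
    True := Or.inr trivial

lemma dz_pointwise (ℓ u c : ℝ) (hℓ : 0 < ℓ) (h : |u - c| ≤ ℓ) :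
    ((if |u| ≤ ℓ then u else ℓ * u / |u|) - u) *
      (((if |u| ≤ ℓ then u else ℓ * u / |u|) - u) + c) ≤ 0 := by
  rcases le_or_gt (|u|) ℓ with hle | hgt
  · simp [hle]
  · rw [if_neg (not_le.mpr hgt)]
    rcases abs_cases u with ⟨hu, hupos⟩ | ⟨hu, huneg⟩
    · rw [hu]
      have hu0 : u ≠ 0 := by intro h0; rw [h0, abs_zero] at hgt; linarith
      rw [mul_div_assoc, div_self hu0, mul_one]
      have h1 : ℓ - u < 0 := by rw [← hu]; linarith
      have h2 : 0 ≤ ℓ - u + c := by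
        have := abs_le.mp h
        linarith [this.1]
      nlinarith
    · rw [hu]
      have hu0 : u ≠ 0 := by intro h0; rw [h0, abs_zero] at hgt; linarith
      have : ℓ * u / (-u) = -(ℓ * u / u) := by rw [div_neg]
      rw [this, mul_div_assoc, div_self hu0, mul_one]
      have h1 : 0 < -ℓ - u := by rw [hu] at hgt; linarith
      have h2 : -ℓ - u + c ≤ 0 := by
        have := abs_le.mp h
        linarith [this.2]
      nlinarith

theorem stmt1 (n m : ℕ) (hn : 0 < n) (hm : 0 < m) (ℓ : ℝ) (hℓ : 0 < ℓ)
    (K C : Matrix (Fin m) (Fin n) ℝ) (D : Matrix (Fin m) (Fin m) ℝ)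
    (hDdiag : D.IsDiag) (hDpos : ∀ i, 0 < D i i)
    (z : Fin n → ℝ) (h : ∀ j, |((K - C).mulVec z) j| ≤ ℓ) :
    deadzone ℓ (K.mulVec z) ⬝ᵥ
      D.mulVec (fun j => deadzone ℓ (K.mulVec z) j + (C.mulVec z) j) ≤ 0 := by
  set φ := deadzone ℓ (K.mulVec z) with hφ
  have hDmul : ∀ i, D.mulVec (fun j => φ j + (C.mulVec z) j) i
      = D i i * (φ i + (C.mulVec z) i) := by
    intro i
    rw [mulVec]
    simp only [dotProduct]
    rw [Finset.sum_eq_single i]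
    · intro b _ hb
      rw [hDdiag (Ne.symm hb), zero_mul]
    · intro hi; exact absurd (Finset.mem_univ i) hi
  unfold dotProduct
  apply Finset.sum_nonpos
  intro j _
  rw [hDmul j]
  have key : φ j * (φ j + (C.mulVec z) j) ≤ 0 := by
    have hjj := h j
    rw [Matrix.sub_mulVec, Pi.sub_apply] at hjj
    exact dz_pointwise ℓ ((K.mulVec z) j) ((C.mulVec z) j) hℓ hjj
  calc φ j * (D j j * (φ j + (C.mulVec z) j))
      = D j j * (φ j * (φ j + (C.mulVec z) j)) := by ring
    _ ≤ 0 := mul_nonpos_of_nonneg_of_nonpos (hDpos j).le key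
end

section
/- Let P = [[P₁₁, P₁₂],[P₂₁, P₂₂]] ∈ ℝ^{(n₁+n₂)×(n₁+n₂)} be a symmetric matrix (so P₂₁ = P₁₂ᵀ) whose diagonal blocks P₁₁ ∈ ℝ^{n₁×n₁} and P₂₂ ∈ ℝ^{n₂×n₂} are positive definite. For a ≥ 0 define P_a := [[a·P₁₁, P₁₂],[P₂₁, P₂₂]]. Then there exists a* ≥ 0 such that: (i) P_{a*} is positive semidefinite but not positive definite; (ii) P_a is positive definite for every a > a*; and (iii) for every a ∈ [0, a*) the matrix P_a is not positive semidefinite. -/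
open Matrix

private lemma mulVec_dotProduct_mulVec' {m n k : ℕ}
    (M : Matrix (Fin m) (Fin n) ℝ) (N : Matrix (Fin m) (Fin k) ℝ)
    (x : Fin n → ℝ) (y : Fin k → ℝ) :
    (M *ᵥ x) ⬝ᵥ (N *ᵥ y) = x ⬝ᵥ (Mᵀ * N) *ᵥ y := by
  rw [dotProduct_mulVec, vecMul_mulVec, ← dotProduct_mulVec]

private lemma quad_block {n₁ n₂ : ℕ} (A : Matrix (Fin n₁) (Fin n₁) ℝ)
    (B : Matrix (Fin n₁) (Fin n₂) ℝ) (C : Matrix (Fin n₂) (Fin n₁) ℝ)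
    (D : Matrix (Fin n₂) (Fin n₂) ℝ) (x : Fin n₁ → ℝ) (y : Fin n₂ → ℝ) :
    Sum.elim x y ⬝ᵥ (fromBlocks A B C D) *ᵥ Sum.elim x y =
      x ⬝ᵥ A *ᵥ x + x ⬝ᵥ B *ᵥ y + (y ⬝ᵥ C *ᵥ x + y ⬝ᵥ D *ᵥ y) := by
  rw [fromBlocks_mulVec, sumElim_dotProduct_sumElim, dotProduct_add, dotProduct_add]
  simp [Sum.elim_comp_inl, Sum.elim_comp_inr]

private lemma quad_cont {n : ℕ} (M : Matrix (Fin n) (Fin n) ℝ) :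
    Continuous fun x : Fin n → ℝ => x ⬝ᵥ M *ᵥ x := by
  unfold dotProduct mulVec
  refine continuous_finset_sum _ fun i _ => ?_
  exact (continuous_apply i).mul
    (continuous_finset_sum _ fun j _ => continuous_const.mul (continuous_apply j))

theorem stmt2 (n₁ n₂ : ℕ) (hn₁ : 0 < n₁) (hn₂ : 0 < n₂)
    (P11 : Matrix (Fin n₁) (Fin n₁) ℝ) (P12 : Matrix (Fin n₁) (Fin n₂) ℝ)
    (P21 : Matrix (Fin n₂) (Fin n₁) ℝ) (P22 : Matrix (Fin n₂) (Fin n₂) ℝ)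
    (hsymm : (Matrix.fromBlocks P11 P12 P21 P22).IsSymm)
    (h11 : P11.PosDef) (h22 : P22.PosDef) :
    ∃ astar : ℝ, 0 ≤ astar ∧
      (Matrix.fromBlocks (astar • P11) P12 P21 P22).PosSemidef ∧
      ¬ (Matrix.fromBlocks (astar • P11) P12 P21 P22).PosDef ∧
      (∀ a : ℝ, astar < a → (Matrix.fromBlocks (a • P11) P12 P21 P22).PosDef) ∧
      (∀ a : ℝ, 0 ≤ a → a < astar →
        ¬ (Matrix.fromBlocks (a • P11) P12 P21 P22).PosSemidef) := by
  obtain ⟨hs11, hBt, hCt, hs22⟩ := isSymm_fromBlocks_iff.mp hsymm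
  have hP12H : P12ᴴ = P21 := by
    rw [conjTranspose_eq_transpose_of_trivial]; exact hBt
  have hdet : IsUnit P22.det := h22.det_pos.ne'.isUnit
  letI : Invertible P22 := h22.isUnit.invertible
  have h22inv : (P22⁻¹).PosDef := h22.inv
  set S : Matrix (Fin n₁) (Fin n₁) ℝ := P12 * P22⁻¹ * P21 with hS
  have hSpsd : S.PosSemidef := by
    have := h22inv.posSemidef.mul_mul_conjTranspose_same P12
    rwa [hP12H] at this
  have hq11 : ∀ x : Fin n₁ → ℝ, x ≠ 0 → 0 < x ⬝ᵥ P11 *ᵥ x := by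
    intro x hx
    have := h11.dotProduct_mulVec_pos hx
    rwa [star_trivial] at this
  have hqS : ∀ x : Fin n₁ → ℝ, 0 ≤ x ⬝ᵥ S *ᵥ x := by
    intro x
    have := hSpsd.dotProduct_mulVec_nonneg x
    rwa [star_trivial] at this
  set g : (Fin n₁ → ℝ) → ℝ := fun x => (x ⬝ᵥ S *ᵥ x) / (x ⬝ᵥ P11 *ᵥ x) with hg
  have hsph_ne : (Metric.sphere (0 : Fin n₁ → ℝ) 1).Nonempty := by
    haveI : Nonempty (Fin n₁) := ⟨⟨0, hn₁⟩⟩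
    exact NormedSpace.sphere_nonempty.mpr zero_le_one
  have hne0 : ∀ x ∈ Metric.sphere (0 : Fin n₁ → ℝ) 1, x ≠ 0 := by
    intro x hx h0
    rw [mem_sphere_iff_norm, sub_zero] at hx
    simp [h0] at hx
  have hgcont : ContinuousOn g (Metric.sphere (0 : Fin n₁ → ℝ) 1) :=
    (quad_cont S).continuousOn.div (quad_cont P11).continuousOn
      (fun x hx => (hq11 x (hne0 x hx)).ne')
  obtain ⟨x₀, hx₀mem, hmax⟩ :=
    (isCompact_sphere (0 : Fin n₁ → ℝ) 1).exists_isMaxOn hsph_ne hgcont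
  have hx₀ne : x₀ ≠ 0 := hne0 x₀ hx₀mem
  set astar : ℝ := g x₀ with hastar
  have hastar_nonneg : 0 ≤ astar := div_nonneg (hqS x₀) (hq11 x₀ hx₀ne).le
  have hle : ∀ x : Fin n₁ → ℝ, x ≠ 0 → x ⬝ᵥ S *ᵥ x ≤ astar * (x ⬝ᵥ P11 *ᵥ x) := by
    intro x hx
    set c : ℝ := ‖x‖⁻¹ with hc
    have hxnorm : ‖x‖ ≠ 0 := norm_ne_zero_iff.mpr hx
    have hcne : c ≠ 0 := inv_ne_zero hxnorm
    have hmem : c • x ∈ Metric.sphere (0 : Fin n₁ → ℝ) 1 := by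
      rw [mem_sphere_iff_norm, sub_zero, norm_smul, hc, norm_inv, norm_norm,
        inv_mul_cancel₀ hxnorm]
    have hscale : ∀ M : Matrix (Fin n₁) (Fin n₁) ℝ,
        (c • x) ⬝ᵥ M *ᵥ (c • x) = c * c * (x ⬝ᵥ M *ᵥ x) := by
      intro M
      rw [mulVec_smul, dotProduct_smul, smul_dotProduct, smul_eq_mul, smul_eq_mul]
      ring
    have hgle : g (c • x) ≤ astar := hmax hmem
    have hgeq : g (c • x) = g x := by
      rw [hg]; simp only
      rw [hscale S, hscale P11, mul_div_mul_left _ _ (by positivity : c * c ≠ 0)]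
    rw [hgeq, hg] at hgle
    simp only at hgle
    calc x ⬝ᵥ S *ᵥ x = (x ⬝ᵥ S *ᵥ x) / (x ⬝ᵥ P11 *ᵥ x) * (x ⬝ᵥ P11 *ᵥ x) :=
          (div_mul_cancel₀ _ (hq11 x hx).ne').symm
      _ ≤ astar * (x ⬝ᵥ P11 *ᵥ x) :=
          mul_le_mul_of_nonneg_right hgle (hq11 x hx).le
  have heq₀ : x₀ ⬝ᵥ S *ᵥ x₀ = astar * (x₀ ⬝ᵥ P11 *ᵥ x₀) := by
    rw [hastar, hg]
    simp only
    rw [div_mul_cancel₀ _ (hq11 x₀ hx₀ne).ne']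
  have hquad : ∀ (a : ℝ) (x : Fin n₁ → ℝ),
      x ⬝ᵥ (a • P11 - S) *ᵥ x = a * (x ⬝ᵥ P11 *ᵥ x) - x ⬝ᵥ S *ᵥ x := by
    intro a x
    rw [sub_mulVec, dotProduct_sub, smul_mulVec, dotProduct_smul, smul_eq_mul]
  have hSchurPSD : (astar • P11 - S).PosSemidef := by
    refine PosSemidef.of_dotProduct_mulVec_nonneg ?_ ?_
    · show (astar • P11 - S)ᴴ = astar • P11 - S
      rw [conjTranspose_sub, conjTranspose_smul, h11.1.eq, hSpsd.1.eq, star_trivial]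
    · intro x
      rw [star_trivial, hquad]
      rcases eq_or_ne x 0 with h0 | h0
      · simp [h0]
      · linarith [hle x h0]
  have hPSD : (Matrix.fromBlocks (astar • P11) P12 P21 P22).PosSemidef := by
    rw [← hP12H, PosDef.fromBlocks₂₂ _ _ h22, hP12H]
    exact hSchurPSD
  have hP22invT : (P22⁻¹)ᵀ = P22⁻¹ := by
    rw [transpose_nonsing_inv, hs22.eq]
  set y₀ : Fin n₂ → ℝ := -((P22⁻¹ * P21) *ᵥ x₀) with hy₀
  set z : Fin n₁ ⊕ Fin n₂ → ℝ := Sum.elim x₀ y₀ with hz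
  have hzne : z ≠ 0 := by
    intro h
    apply hx₀ne
    funext i
    have := congrFun h (Sum.inl i)
    simpa [hz] using this
  have hzform : ∀ a : ℝ,
      z ⬝ᵥ (Matrix.fromBlocks (a • P11) P12 P21 P22) *ᵥ z =
        a * (x₀ ⬝ᵥ P11 *ᵥ x₀) - x₀ ⬝ᵥ S *ᵥ x₀ := by
    intro a
    rw [hz, quad_block]
    have t1 : x₀ ⬝ᵥ (a • P11) *ᵥ x₀ = a * (x₀ ⬝ᵥ P11 *ᵥ x₀) := by
      rw [smul_mulVec, dotProduct_smul, smul_eq_mul]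
    have t2 : x₀ ⬝ᵥ P12 *ᵥ y₀ = -(x₀ ⬝ᵥ S *ᵥ x₀) := by
      rw [hy₀, mulVec_neg, dotProduct_neg, mulVec_mulVec, ← Matrix.mul_assoc, hS]
    have t3 : y₀ ⬝ᵥ P21 *ᵥ x₀ = -(x₀ ⬝ᵥ S *ᵥ x₀) := by
      rw [hy₀, neg_dotProduct, mulVec_dotProduct_mulVec', transpose_mul, hP22invT,
        hCt, hS]
    have t4 : y₀ ⬝ᵥ P22 *ᵥ y₀ = x₀ ⬝ᵥ S *ᵥ x₀ := by
      rw [hy₀, mulVec_neg, neg_dotProduct, dotProduct_neg, neg_neg, mulVec_mulVec,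
        ← Matrix.mul_assoc, Matrix.mul_nonsing_inv _ hdet, Matrix.one_mul,
        mulVec_dotProduct_mulVec', transpose_mul, hP22invT, hCt, hS]
    rw [t1, t2, t3, t4]; ring
  refine ⟨astar, hastar_nonneg, hPSD, ?_, ?_, ?_⟩
  · -- not PosDef at astar
    intro hPD
    have := hPD.dotProduct_mulVec_pos hzne
    rw [star_trivial, hzform, heq₀] at this
    simp at this
  · -- PosDef for a > astar
    intro a ha
    refine PosDef.of_dotProduct_mulVec_pos ?_ ?_
    · show (Matrix.fromBlocks (a • P11) P12 P21 P22)ᴴ = _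
      rw [conjTranspose_eq_transpose_of_trivial]
      exact (IsSymm.fromBlocks
        (by rw [Matrix.IsSymm, transpose_smul, hs11.eq]) hBt hs22)
    · intro x hx
      rw [star_trivial]
      have hdecomp : Matrix.fromBlocks (a • P11) P12 P21 P22 =
          Matrix.fromBlocks (astar • P11) P12 P21 P22 +
            Matrix.fromBlocks ((a - astar) • P11) 0 0 0 := by
        have hsc : a • P11 = astar • P11 + (a - astar) • P11 := by
          rw [← add_smul]; norm_num
        rw [hsc, Matrix.fromBlocks_add]; simp
      set x₁ := x ∘ Sum.inl with hx₁
      set x₂ := x ∘ Sum.inr with hx₂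
      have hxe : x = Sum.elim x₁ x₂ := (Sum.elim_comp_inl_inr x).symm
      have hextra : Sum.elim x₁ x₂ ⬝ᵥ
          (Matrix.fromBlocks ((a - astar) • P11) 0 0 0) *ᵥ Sum.elim x₁ x₂ =
          (a - astar) * (x₁ ⬝ᵥ P11 *ᵥ x₁) := by
        rw [quad_block]
        simp [smul_mulVec, dotProduct_smul, smul_eq_mul]
      have hbase : 0 ≤ Sum.elim x₁ x₂ ⬝ᵥ
          (Matrix.fromBlocks (astar • P11) P12 P21 P22) *ᵥ Sum.elim x₁ x₂ := by
        have := hPSD.dotProduct_mulVec_nonneg (Sum.elim x₁ x₂)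
        rwa [star_trivial] at this
      rw [hxe, hdecomp, Matrix.add_mulVec, dotProduct_add, hextra]
      rcases eq_or_ne x₁ 0 with h1 | h1
      · have h2 : x₂ ≠ 0 := by
          intro h2
          apply hx
          rw [hxe, h1, h2]
          ext (i | i) <;> simp
        have hP22pos : 0 < x₂ ⬝ᵥ P22 *ᵥ x₂ := by
          have := h22.dotProduct_mulVec_pos h2
          rwa [star_trivial] at this
        have hval : Sum.elim x₁ x₂ ⬝ᵥ
            (Matrix.fromBlocks (astar • P11) P12 P21 P22) *ᵥ Sum.elim x₁ x₂ =
            x₂ ⬝ᵥ P22 *ᵥ x₂ := by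
          rw [quad_block, h1]
          simp
        rw [hval, h1]
        simp [hP22pos]
      · have : 0 < (a - astar) * (x₁ ⬝ᵥ P11 *ᵥ x₁) :=
          mul_pos (by linarith) (hq11 x₁ h1)
        linarith
  · -- not PosSemidef for a < astar
    intro a _ ha hPS
    have := hPS.dotProduct_mulVec_nonneg z
    rw [star_trivial, hzform, heq₀] at this
    have hpos := hq11 x₀ hx₀ne
    nlinarith
end

section
/- Let n, m ∈ ℕ*, A ∈ ℝ^{n×n}, B ∈ ℝ^{n×m}, K ∈ ℝ^{m×n} and ℓ > 0. Then the following two assertions are equivalent: (1) there exist a symmetric positive definite matrix P ∈ ℝ^{n×n}, a diagonal matrix D ∈ ℝ^{m×m} with positive diagonal entries, and C ∈ ℝ^{m×n} such that M1 < 0 and M2 ≥ 0; (2) there exist a symmetric positive definite matrix S ∈ ℝ^{n×n}, a diagonal matrix E ∈ ℝ^{m×m} with positive diagonal entries, and Y ∈ ℝ^{m×n} such that the matrix [[S(A+BK)ᵀ + (A+BK)S, BE − Yᵀ],[(BE − Yᵀ)ᵀ, −2E]] is negative definite and the matrix [[S, SKᵀ − Yᵀ],[(SKᵀ − Yᵀ)ᵀ,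 ℓ²·I_m]] is positive semidefinite. -/
open Matrix

/-- The block matrix `M1` from the paper. -/
def M1mat {n m : ℕ} (A : Matrix (Fin n) (Fin n) ℝ) (B : Matrix (Fin n) (Fin m) ℝ)
    (K C : Matrix (Fin m) (Fin n) ℝ) (P : Matrix (Fin n) (Fin n) ℝ)
    (D : Matrix (Fin m) (Fin m) ℝ) : Matrix (Fin n ⊕ Fin m) (Fin n ⊕ Fin m) ℝ :=
  Matrix.fromBlocks ((A + B * K)ᵀ * P + P * (A + B * K)) (P * B - (D * C)ᵀ)
    (Bᵀ * P - D * C) ((-2 : ℝ) • D)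

/-- The block matrix `M2` from the paper. -/
def M2mat {n m : ℕ} (K C : Matrix (Fin m) (Fin n) ℝ) (P : Matrix (Fin n) (Fin n) ℝ)
    (ℓ : ℝ) : Matrix (Fin n ⊕ Fin m) (Fin n ⊕ Fin m) ℝ :=
  Matrix.fromBlocks P (K - C)ᵀ (K - C) (ℓ ^ 2 • (1 : Matrix (Fin m) (Fin m) ℝ))

lemma conjT_eq_T {a b : Type*} (T : Matrix a b ℝ) : Tᴴ = Tᵀ := by
  ext i j; simp [Matrix.conjTranspose]

lemma real_conj_psd {k : Type*} [Fintype k] {N : Matrix k k ℝ} (hN : N.PosSemidef)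
    (T : Matrix k k ℝ) : (Tᵀ * N * T).PosSemidef := by
  simpa [conjT_eq_T] using hN.conjTranspose_mul_mul_same T

lemma real_conj_posdef {k : Type*} [Fintype k] [DecidableEq k] {N T : Matrix k k ℝ}
    (hN : N.PosDef) (hT : IsUnit T.det) : (Tᵀ * N * T).PosDef := by
  refine Matrix.posDef_iff_dotProduct_mulVec.mpr ⟨?_, fun x hx => ?_⟩
  · have := Matrix.isHermitian_conjTranspose_mul_mul T hN.1
    simpa [conjT_eq_T] using this
  · have hTx : T *ᵥ x ≠ 0 := by
      intro h
      apply hx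
      have : T⁻¹ *ᵥ (T *ᵥ x) = x := by
        rw [Matrix.mulVec_mulVec, Matrix.nonsing_inv_mul _ hT, Matrix.one_mulVec]
      rw [h, Matrix.mulVec_zero] at this
      exact this.symm
    have := hN.dotProduct_mulVec_pos hTx
    simpa only [star_mulVec, dotProduct_mulVec, vecMul_vecMul, conjT_eq_T] using this

lemma blockconj {n m : ℕ} (S : Matrix (Fin n) (Fin n) ℝ) (E : Matrix (Fin m) (Fin m) ℝ)
    (X₁₁ : Matrix (Fin n) (Fin n) ℝ) (X₁₂ : Matrix (Fin n) (Fin m) ℝ)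
    (X₂₁ : Matrix (Fin m) (Fin n) ℝ) (X₂₂ : Matrix (Fin m) (Fin m) ℝ) :
    (Matrix.fromBlocks S 0 0 E)ᵀ * Matrix.fromBlocks X₁₁ X₁₂ X₂₁ X₂₂ *
      Matrix.fromBlocks S 0 0 E =
    Matrix.fromBlocks (Sᵀ * X₁₁ * S) (Sᵀ * X₁₂ * E) (Eᵀ * X₂₁ * S) (Eᵀ * X₂₂ * E) := by
  simp [Matrix.fromBlocks_transpose, Matrix.fromBlocks_multiply]

theorem stmt3 (n m : ℕ) (hn : 0 < n) (hm : 0 < m)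
    (A : Matrix (Fin n) (Fin n) ℝ) (B : Matrix (Fin n) (Fin m) ℝ)
    (K : Matrix (Fin m) (Fin n) ℝ) (ℓ : ℝ) (hℓ : 0 < ℓ) :
    (∃ (P : Matrix (Fin n) (Fin n) ℝ) (D : Matrix (Fin m) (Fin m) ℝ)
        (C : Matrix (Fin m) (Fin n) ℝ),
      P.PosDef ∧ D.IsDiag ∧ (∀ i, 0 < D i i) ∧
      (-(M1mat A B K C P D)).PosDef ∧ (M2mat K C P ℓ).PosSemidef) ↔
    (∃ (S : Matrix (Fin n) (Fin n) ℝ) (E : Matrix (Fin m) (Fin m) ℝ)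
        (Y : Matrix (Fin m) (Fin n) ℝ),
      S.PosDef ∧ E.IsDiag ∧ (∀ i, 0 < E i i) ∧
      (-(Matrix.fromBlocks (S * (A + B * K)ᵀ + (A + B * K) * S) (B * E - Yᵀ)
          ((B * E - Yᵀ)ᵀ) ((-2 : ℝ) • E))).PosDef ∧
      (Matrix.fromBlocks S (S * Kᵀ - Yᵀ) ((S * Kᵀ - Yᵀ)ᵀ)
          (ℓ ^ 2 • (1 : Matrix (Fin m) (Fin m) ℝ))).PosSemidef) := by
  constructor
  · rintro ⟨P, D, C, hP, hDdiag, hDpos, hM1, hM2⟩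
    set S : Matrix (Fin n) (Fin n) ℝ := P⁻¹ with hSdef
    set E : Matrix (Fin m) (Fin m) ℝ := Matrix.diagonal (fun i => (D i i)⁻¹) with hEdef
    set Y : Matrix (Fin m) (Fin n) ℝ := C * S with hYdef
    have hPdet : IsUnit P.det := hP.det_pos.ne'.isUnit
    have hPT : Pᵀ = P := by rw [← conjT_eq_T]; exact hP.1
    have hSP : S * P = 1 := Matrix.nonsing_inv_mul P hPdet
    have hPS : P * S = 1 := Matrix.mul_nonsing_inv P hPdet
    have hSsym : Sᵀ = S := by rw [hSdef, Matrix.transpose_nonsing_inv, hPT]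
    have hDeq : Matrix.diagonal (fun i => D i i) = D := hDdiag.diagonal_diag
    have hDE : D * E = 1 := by
      rw [← hDeq, hEdef, Matrix.diagonal_mul_diagonal]
      rw [show (fun i => D i i * (D i i)⁻¹) = fun _ => (1 : ℝ) from
        funext fun i => mul_inv_cancel₀ (hDpos i).ne', Matrix.diagonal_one]
    have hED : E * D = 1 := by
      rw [← hDeq, hEdef, Matrix.diagonal_mul_diagonal]
      rw [show (fun i => (D i i)⁻¹ * D i i) = fun _ => (1 : ℝ) from
        funext fun i => inv_mul_cancel₀ (hDpos i).ne', Matrix.diagonal_one]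
    have hDT : Dᵀ = D := by rw [← hDeq, Matrix.diagonal_transpose]
    have hET : Eᵀ = E := by rw [hEdef, Matrix.diagonal_transpose]
    have hS : S.PosDef := hP.inv
    have hE : E.PosDef := Matrix.PosDef.diagonal (fun i => inv_pos.mpr (hDpos i))
    refine ⟨S, E, Y, hS, Matrix.isDiag_diagonal _, ?_, ?_, ?_⟩
    · intro i; rw [hEdef]; simpa using inv_pos.mpr (hDpos i)
    · -- M1 direction
      have hTdet : IsUnit (Matrix.fromBlocks S 0 0 E).det := by
        rw [Matrix.det_fromBlocks_zero₂₁]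
        exact (mul_pos hS.det_pos hE.det_pos).ne'.isUnit
      have hb11 : S * ((A + B * K)ᵀ * P + P * (A + B * K)) * S =
          S * (A + B * K)ᵀ + (A + B * K) * S := by
        have h : S * ((A + B * K)ᵀ * P + P * (A + B * K)) * S =
            S * (A + B * K)ᵀ * (P * S) + (S * P) * ((A + B * K) * S) := by noncomm_ring
        rw [h, hPS, hSP, Matrix.mul_one, Matrix.one_mul]
      have hb12 : S * (P * B - (D * C)ᵀ) * E = B * E - Yᵀ := by
        rw [hYdef, Matrix.transpose_mul, Matrix.transpose_mul, hDT, hSsym]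
        simp only [Matrix.mul_sub, Matrix.sub_mul, ← Matrix.mul_assoc]
        rw [hSP, Matrix.one_mul, Matrix.mul_assoc (S * Cᵀ), hDE, Matrix.mul_one]
      have hb21 : E * (Bᵀ * P - D * C) * S = (B * E - Yᵀ)ᵀ := by
        rw [hYdef, Matrix.transpose_sub, Matrix.transpose_transpose, Matrix.transpose_mul, hET]
        simp only [Matrix.mul_sub, Matrix.sub_mul, ← Matrix.mul_assoc]
        rw [Matrix.mul_assoc (E * Bᵀ), hPS, Matrix.mul_one, hED, Matrix.one_mul]
      have hb22 : E * ((-2 : ℝ) • D) * E = (-2 : ℝ) • E := by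
        rw [Matrix.mul_smul, Matrix.smul_mul, hED, Matrix.one_mul]
      have heq : (Matrix.fromBlocks S 0 0 E)ᵀ * (M1mat A B K C P D) *
          Matrix.fromBlocks S 0 0 E =
          Matrix.fromBlocks (S * (A + B * K)ᵀ + (A + B * K) * S) (B * E - Yᵀ)
            ((B * E - Yᵀ)ᵀ) ((-2 : ℝ) • E) := by
        rw [M1mat, blockconj, hSsym, hET, hb11, hb12, hb21, hb22]
      have := real_conj_posdef hM1 hTdet
      rwa [Matrix.mul_neg, Matrix.neg_mul, heq] at this
    · -- M2 direction
      have hb11 : S * P * S = S := by rw [hSP, Matrix.one_mul]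
      have hb12 : S * (K - C)ᵀ * (1 : Matrix (Fin m) (Fin m) ℝ) = S * Kᵀ - Yᵀ := by
        rw [Matrix.mul_one, Matrix.transpose_sub, Matrix.mul_sub, hYdef,
          Matrix.transpose_mul, hSsym]
      have hb21 : (1 : Matrix (Fin m) (Fin m) ℝ) * (K - C) * S = (S * Kᵀ - Yᵀ)ᵀ := by
        rw [Matrix.one_mul, hYdef, Matrix.transpose_sub, Matrix.transpose_transpose,
          Matrix.transpose_mul, Matrix.transpose_transpose, hSsym, Matrix.sub_mul]
      have hb22 : (1 : Matrix (Fin m) (Fin m) ℝ) * (ℓ ^ 2 • (1 : Matrix (Fin m) (Fin m) ℝ)) *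
          (1 : Matrix (Fin m) (Fin m) ℝ) = ℓ ^ 2 • (1 : Matrix (Fin m) (Fin m) ℝ) := by
        rw [Matrix.one_mul, Matrix.mul_one]
      have heq : (Matrix.fromBlocks S 0 0 (1 : Matrix (Fin m) (Fin m) ℝ))ᵀ *
          (M2mat K C P ℓ) * Matrix.fromBlocks S 0 0 (1 : Matrix (Fin m) (Fin m) ℝ) =
          Matrix.fromBlocks S (S * Kᵀ - Yᵀ) ((S * Kᵀ - Yᵀ)ᵀ)
            (ℓ ^ 2 • (1 : Matrix (Fin m) (Fin m) ℝ)) := by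
        rw [M2mat, blockconj, hSsym, Matrix.transpose_one, hb11, hb12, hb21, hb22]
      have := real_conj_psd hM2 (Matrix.fromBlocks S 0 0 (1 : Matrix (Fin m) (Fin m) ℝ))
      rwa [heq] at this
  · rintro ⟨S, E, Y, hS, hEdiag, hEpos, hM1, hM2⟩
    set P : Matrix (Fin n) (Fin n) ℝ := S⁻¹ with hPdef
    set D : Matrix (Fin m) (Fin m) ℝ := Matrix.diagonal (fun i => (E i i)⁻¹) with hDdef
    set C : Matrix (Fin m) (Fin n) ℝ := Y * P with hCdef
    have hSdet : IsUnit S.det := hS.det_pos.ne'.isUnit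
    have hST : Sᵀ = S := by rw [← conjT_eq_T]; exact hS.1
    have hPS : P * S = 1 := Matrix.nonsing_inv_mul S hSdet
    have hSP : S * P = 1 := Matrix.mul_nonsing_inv S hSdet
    have hPsym : Pᵀ = P := by rw [hPdef, Matrix.transpose_nonsing_inv, hST]
    have hEeq : Matrix.diagonal (fun i => E i i) = E := hEdiag.diagonal_diag
    have hDE : D * E = 1 := by
      rw [← hEeq, hDdef, Matrix.diagonal_mul_diagonal]
      rw [show (fun i => (E i i)⁻¹ * E i i) = fun _ => (1 : ℝ) from
        funext fun i => inv_mul_cancel₀ (hEpos i).ne', Matrix.diagonal_one]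
    have hED : E * D = 1 := by
      rw [← hEeq, hDdef, Matrix.diagonal_mul_diagonal]
      rw [show (fun i => E i i * (E i i)⁻¹) = fun _ => (1 : ℝ) from
        funext fun i => mul_inv_cancel₀ (hEpos i).ne', Matrix.diagonal_one]
    have hDT : Dᵀ = D := by rw [hDdef, Matrix.diagonal_transpose]
    have hET : Eᵀ = E := by rw [← hEeq, Matrix.diagonal_transpose]
    have hP : P.PosDef := hS.inv
    have hD : D.PosDef := Matrix.PosDef.diagonal (fun i => inv_pos.mpr (hEpos i))
    refine ⟨P, D, C, hP, Matrix.isDiag_diagonal _, ?_, ?_, ?_⟩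
    · intro i; rw [hDdef]; simpa using inv_pos.mpr (hEpos i)
    · -- M1 direction
      have hTdet : IsUnit (Matrix.fromBlocks P 0 0 D).det := by
        rw [Matrix.det_fromBlocks_zero₂₁]
        exact (mul_pos hP.det_pos hD.det_pos).ne'.isUnit
      have hb11 : P * (S * (A + B * K)ᵀ + (A + B * K) * S) * P =
          (A + B * K)ᵀ * P + P * (A + B * K) := by
        have h : P * (S * (A + B * K)ᵀ + (A + B * K) * S) * P =
            (P * S) * ((A + B * K)ᵀ * P) + P * (A + B * K) * (S * P) := by noncomm_ring
        rw [h, hPS, hSP, Matrix.mul_one, Matrix.one_mul]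
      have hb12 : P * (B * E - Yᵀ) * D = P * B - (D * C)ᵀ := by
        rw [hCdef, Matrix.transpose_mul, Matrix.transpose_mul, hDT, hPsym]
        simp only [Matrix.mul_sub, Matrix.sub_mul, ← Matrix.mul_assoc]
        rw [Matrix.mul_assoc (P * B), hED, Matrix.mul_one]
      have hb21 : D * (B * E - Yᵀ)ᵀ * P = Bᵀ * P - D * C := by
        rw [hCdef, Matrix.transpose_sub, Matrix.transpose_transpose, Matrix.transpose_mul, hET]
        simp only [Matrix.mul_sub, Matrix.sub_mul, ← Matrix.mul_assoc]
        rw [hDE, Matrix.one_mul]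
      have hb22 : D * ((-2 : ℝ) • E) * D = (-2 : ℝ) • D := by
        rw [Matrix.mul_smul, Matrix.smul_mul, hDE, Matrix.one_mul]
      have heq : (Matrix.fromBlocks P 0 0 D)ᵀ *
          (Matrix.fromBlocks (S * (A + B * K)ᵀ + (A + B * K) * S) (B * E - Yᵀ)
            ((B * E - Yᵀ)ᵀ) ((-2 : ℝ) • E)) * Matrix.fromBlocks P 0 0 D =
          M1mat A B K C P D := by
        rw [M1mat, blockconj, hPsym, hDT, hb11, hb12, hb21, hb22]
      have := real_conj_posdef hM1 hTdet
      rwa [Matrix.mul_neg, Matrix.neg_mul, heq] at this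
    · -- M2 direction
      have hb11 : P * S * P = P := by rw [hPS, Matrix.one_mul]
      have hb12 : P * (S * Kᵀ - Yᵀ) * (1 : Matrix (Fin m) (Fin m) ℝ) = (K - C)ᵀ := by
        rw [Matrix.mul_one, hCdef, Matrix.transpose_sub, Matrix.transpose_mul, hPsym,
          Matrix.mul_sub, ← Matrix.mul_assoc, hPS, Matrix.one_mul]
      have hb21 : (1 : Matrix (Fin m) (Fin m) ℝ) * (S * Kᵀ - Yᵀ)ᵀ * P = K - C := by
        rw [Matrix.one_mul, hCdef, Matrix.transpose_sub, Matrix.transpose_transpose,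
          Matrix.transpose_mul, Matrix.transpose_transpose, hST, Matrix.sub_mul,
          Matrix.mul_assoc, hSP, Matrix.mul_one]
      have hb22 : (1 : Matrix (Fin m) (Fin m) ℝ) * (ℓ ^ 2 • (1 : Matrix (Fin m) (Fin m) ℝ)) *
          (1 : Matrix (Fin m) (Fin m) ℝ) = ℓ ^ 2 • (1 : Matrix (Fin m) (Fin m) ℝ) := by
        rw [Matrix.one_mul, Matrix.mul_one]
      have heq : (Matrix.fromBlocks P 0 0 (1 : Matrix (Fin m) (Fin m) ℝ))ᵀ *
          (Matrix.fromBlocks S (S * Kᵀ - Yᵀ) ((S * Kᵀ - Yᵀ)ᵀ)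
            (ℓ ^ 2 • (1 : Matrix (Fin m) (Fin m) ℝ))) *
          Matrix.fromBlocks P 0 0 (1 : Matrix (Fin m) (Fin m) ℝ) = M2mat K C P ℓ := by
        rw [M2mat, blockconj, hPsym, Matrix.transpose_one, hb11, hb12, hb21, hb22]
      have := real_conj_psd hM2 (Matrix.fromBlocks P 0 0 (1 : Matrix (Fin m) (Fin m) ℝ))
      rwa [heq] at this
end

section
/- Let n, m ∈ ℕ*, ℓ > 0, K, C ∈ ℝ^{m×n}, and let P ∈ ℝ^{n×n} be symmetric positive definite. Then the block matrix M2 := [[P, (K−C)ᵀ],[K−C, ℓ²·I_m]] is positive semidefinite if and only if every z ∈ ℝⁿ with zᵀPz ≤ 1 satisfies |(K−C)z| ≤ ℓ, where |·| denotes the Euclidean norm on ℝ^m. -/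
open Matrix

lemma quadform {n m : ℕ} (A : Matrix (Fin m) (Fin n) ℝ) (P : Matrix (Fin n) (Fin n) ℝ) (ℓ : ℝ)
    (x : Fin n → ℝ) (y : Fin m → ℝ) :
    Sum.elim x y ⬝ᵥ (Matrix.fromBlocks P Aᵀ A (ℓ ^ 2 • (1 : Matrix (Fin m) (Fin m) ℝ))) *ᵥ Sum.elim x y
      = x ⬝ᵥ P *ᵥ x + 2 * (y ⬝ᵥ A *ᵥ x) + ℓ ^ 2 * (y ⬝ᵥ y) := by
  rw [fromBlocks_mulVec, sumElim_dotProduct_sumElim]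
  simp only [Sum.elim_comp_inl, Sum.elim_comp_inr]
  rw [dotProduct_add, dotProduct_add, smul_mulVec, one_mulVec, dotProduct_smul]
  have : x ⬝ᵥ Aᵀ *ᵥ y = y ⬝ᵥ A *ᵥ x := by
    rw [dotProduct_mulVec, vecMul_transpose, dotProduct_comm]
  rw [this, smul_eq_mul]; ring

theorem stmt5 (n m : ℕ) (hn : 0 < n) (hm : 0 < m) (ℓ : ℝ) (hℓ : 0 < ℓ)
    (K C : Matrix (Fin m) (Fin n) ℝ) (P : Matrix (Fin n) (Fin n) ℝ) (hP : P.PosDef) :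
    (M2mat K C P ℓ).PosSemidef ↔
      ∀ z : Fin n → ℝ, z ⬝ᵥ P.mulVec z ≤ 1 →
        Real.sqrt (∑ j, ((K - C).mulVec z j) ^ 2) ≤ ℓ := by
  set A := K - C with hA
  have hℓ2 : (0:ℝ) < ℓ ^ 2 := by positivity
  have hdpn : ∀ (v : Fin m → ℝ), 0 ≤ v ⬝ᵥ v :=
    fun v => Finset.sum_nonneg fun i _ => mul_self_nonneg _
  have hsum : ∀ v : Fin m → ℝ, (∑ j, (v j) ^ 2) = v ⬝ᵥ v := by
    intro v; simp [dotProduct, sq]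
  constructor
  · intro h z hz
    set v := A *ᵥ z with hv
    have key := h.dotProduct_mulVec_nonneg (Sum.elim z ((-(ℓ ^ 2)⁻¹) • v))
    rw [star_trivial] at key
    rw [show (M2mat K C P ℓ) = Matrix.fromBlocks P Aᵀ A (ℓ ^ 2 • (1 : Matrix (Fin m) (Fin m) ℝ)) from rfl,
      quadform] at key
    simp only [smul_dotProduct, dotProduct_smul, smul_eq_mul] at key
    rw [← hv] at key
    set t := v ⬝ᵥ v with ht
    have htnn : 0 ≤ t := hdpn v
    have hc : ℓ ^ 2 * ((ℓ ^ 2)⁻¹ * ((ℓ ^ 2)⁻¹ * t)) = (ℓ ^ 2)⁻¹ * t := by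
      field_simp
    have hct : (ℓ ^ 2)⁻¹ * t ≤ 1 := by nlinarith [hc, key, hz]
    have ht1 : t ≤ ℓ ^ 2 := by
      have h2 := mul_le_mul_of_nonneg_left hct hℓ2.le
      rw [mul_one] at h2
      calc t = ℓ ^ 2 * ((ℓ ^ 2)⁻¹ * t) := by field_simp
      _ ≤ ℓ ^ 2 := h2
    rw [hsum]
    calc Real.sqrt t ≤ Real.sqrt (ℓ ^ 2) := Real.sqrt_le_sqrt ht1
    _ = ℓ := by rw [Real.sqrt_sq hℓ.le]
  · intro h
    have hH : (M2mat K C P ℓ).IsHermitian := by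
      rw [show (M2mat K C P ℓ) = Matrix.fromBlocks P Aᵀ A (ℓ ^ 2 • (1 : Matrix (Fin m) (Fin m) ℝ)) from rfl]
      rw [isHermitian_fromBlocks_iff]
      refine ⟨hP.isHermitian, ?_, ?_, ?_⟩
      · ext i j; simp [conjTranspose_apply]
      · ext i j; simp [conjTranspose_apply]
      · rw [Matrix.IsHermitian, conjTranspose_smul, star_trivial, isHermitian_one.eq]
    refine PosSemidef.of_dotProduct_mulVec_nonneg hH fun w => ?_
    rw [star_trivial]
    have hw : w = Sum.elim (w ∘ Sum.inl) (w ∘ Sum.inr) := (Sum.elim_comp_inl_inr w).symm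
    set x := w ∘ Sum.inl
    set y := w ∘ Sum.inr
    rw [hw, show (M2mat K C P ℓ) = Matrix.fromBlocks P Aᵀ A (ℓ ^ 2 • (1 : Matrix (Fin m) (Fin m) ℝ)) from rfl,
      quadform]
    set v := A *ᵥ x with hv
    set u := y ⬝ᵥ y with hu
    have hu0 : 0 ≤ u := by exact Finset.sum_nonneg fun i _ => mul_self_nonneg _
    by_cases hx : x = 0
    · simp [hx, hv, hu, mulVec_zero]
      positivity
    · have hs2 : 0 < x ⬝ᵥ P *ᵥ x := by have := hP.dotProduct_mulVec_pos hx; rwa [star_trivial] at this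
      set s := Real.sqrt (x ⬝ᵥ P *ᵥ x) with hs
      have hs0 : 0 < s := Real.sqrt_pos.mpr hs2
      have hss : s ^ 2 = x ⬝ᵥ P *ᵥ x := Real.sq_sqrt hs2.le
      -- apply hypothesis to z = s⁻¹ • x
      have hz1 : (s⁻¹ • x) ⬝ᵥ P *ᵥ (s⁻¹ • x) ≤ 1 := by
        rw [show s⁻¹ • x ⬝ᵥ P *ᵥ s⁻¹ • x = s⁻¹ * (s⁻¹ * (x ⬝ᵥ P *ᵥ x)) from by
          rw [smul_dotProduct, mulVec_smul, dotProduct_smul, smul_eq_mul, smul_eq_mul]]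
        rw [← hss, sq]
        field_simp; exact le_refl 1
      have hb := h (s⁻¹ • x) hz1
      have hAv : A *ᵥ (s⁻¹ • x) = s⁻¹ • v := by rw [hv, mulVec_smul]
      rw [hAv] at hb
      have hnorm : Real.sqrt (∑ j, ((s⁻¹ • v) j) ^ 2) = s⁻¹ * Real.sqrt (v ⬝ᵥ v) := by
        rw [hsum, smul_dotProduct, dotProduct_smul, smul_eq_mul, smul_eq_mul, ← mul_assoc,
          ← sq, Real.sqrt_mul (by positivity), Real.sqrt_sq (by positivity)]
      rw [hnorm] at hb
      have hvv : 0 ≤ v ⬝ᵥ v := hdpn v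
      have hbv : Real.sqrt (v ⬝ᵥ v) ≤ ℓ * s := by
        have := mul_le_mul_of_nonneg_left hb hs0.le
        rw [← mul_assoc, mul_inv_cancel₀ hs0.ne', one_mul] at this
        linarith [this]
      have htle : v ⬝ᵥ v ≤ ℓ ^ 2 * s ^ 2 := by
        have := mul_self_le_mul_self (Real.sqrt_nonneg (v ⬝ᵥ v)) hbv
        rw [Real.mul_self_sqrt hvv] at this
        nlinarith [this]
      -- Cauchy-Schwarz
      have hcs : (y ⬝ᵥ v) ^ 2 ≤ u * (v ⬝ᵥ v) := by
        have := Finset.sum_mul_sq_le_sq_mul_sq Finset.univ y v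
        simpa [dotProduct, sq, hu, mul_pow] using this
      have ha2 : (y ⬝ᵥ v) ^ 2 ≤ ℓ ^ 2 * s ^ 2 * u := by
        nlinarith [mul_le_mul_of_nonneg_left htle hu0]
      rw [← hss]
      nlinarith [ha2, sq_nonneg (s ^ 2 + y ⬝ᵥ v), mul_pos hs0 hs0, hu0, hs0]
end

section
/- Let n, m ∈ ℕ*, A ∈ ℝ^{n×n}, B ∈ ℝ^{n×m}, K, C ∈ ℝ^{m×n}, ℓ > 0, let P ∈ ℝ^{n×n} be symmetric positive definite and D ∈ ℝ^{m×m} diagonal with positive diagonal entries, and assume M1 < 0 and M2 ≥ 0. Then there exists α > 0 such that for every z ∈ ℝⁿ with zᵀPz ≤ 1 one has 2·zᵀP(Az + B·sat_ℓ(Kz)) ≤ −α·|z|², where |z| is the Euclidean norm of z. -/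
open Matrix

lemma posdef_lower {ι : Type*} [Fintype ι] [DecidableEq ι] [Nonempty ι] {S : Matrix ι ι ℝ}
    (hS : S.PosDef) : ∃ ε : ℝ, 0 < ε ∧ ∀ x : ι → ℝ, ε * ∑ i, (x i) ^ 2 ≤ x ⬝ᵥ S.mulVec x := by
  set e := (WithLp.equiv 2 (ι → ℝ)).symm with he
  have hcont : Continuous fun x : EuclideanSpace ℝ ι => (e.symm x) ⬝ᵥ S.mulVec (e.symm x) := by
    have h1 : Continuous fun x : ι → ℝ => x ⬝ᵥ S.mulVec x := by
      simp only [dotProduct, Matrix.mulVec]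
      fun_prop
    have h2 : Continuous (⇑e.symm : EuclideanSpace ℝ ι → (ι → ℝ)) := by
      rw [he, Equiv.symm_symm]
      exact PiLp.continuous_ofLp (p := 2) (β := fun _ : ι => ℝ)
    exact h1.comp h2
  obtain ⟨x0, hx0⟩ : (Metric.sphere (0 : EuclideanSpace ℝ ι) 1).Nonempty :=
    NormedSpace.sphere_nonempty.2 zero_le_one
  obtain ⟨y, hy, hmin⟩ := (isCompact_sphere (0 : EuclideanSpace ℝ ι) 1).exists_isMinOn ⟨x0, hx0⟩
    hcont.continuousOn
  set ε := (e.symm y) ⬝ᵥ S.mulVec (e.symm y) with hε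
  have hyn : ‖y‖ = 1 := by simpa using (Metric.mem_sphere.mp hy)
  have hyne : (e.symm y) ≠ 0 := by
    intro h
    have h0 : ∀ i, y i = (0 : ℝ) := by
      intro i
      have := congrFun h i
      simpa [he] using this
    rw [EuclideanSpace.norm_eq] at hyn
    simp only [h0] at hyn
    norm_num at hyn
  refine ⟨ε, (by have h := hS.dotProduct_mulVec_pos hyne; rwa [star_trivial] at h), fun x => ?_⟩
  by_cases hx : x = 0
  · simp [hx, dotProduct]
  · set t : ℝ := Real.sqrt (∑ i, (x i)^2) with ht
    have hts : t ^ 2 = ∑ i, (x i)^2 := Real.sq_sqrt (by positivity)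
    have htpos : 0 < t := by
      rw [ht]
      apply Real.sqrt_pos.2
      rcases Function.ne_iff.mp hx with ⟨i, hi⟩
      exact Finset.sum_pos' (fun j _ => sq_nonneg _)
        ⟨i, Finset.mem_univ i, pow_pos (abs_pos.2 hi) 2 |>.trans_eq (sq_abs _)⟩
    have hxt : e (t⁻¹ • x) ∈ Metric.sphere (0 : EuclideanSpace ℝ ι) 1 := by
      rw [Metric.mem_sphere, dist_zero_right, EuclideanSpace.norm_eq]
      have hco : ∀ i, ‖(e (t⁻¹ • x)) i‖ ^ 2 = t⁻¹^2 * (x i)^2 := by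
        intro i
        simp [he, Pi.smul_apply, mul_pow, sq_abs, smul_eq_mul]
      rw [Finset.sum_congr rfl (fun i _ => hco i), ← Finset.mul_sum, ← hts]
      rw [show t⁻¹ ^ 2 * t ^ 2 = 1 by field_simp]
      simp
    have h1 : ε ≤ (e.symm (e (t⁻¹ • x))) ⬝ᵥ S.mulVec (e.symm (e (t⁻¹ • x))) := hmin hxt
    rw [Equiv.symm_apply_apply] at h1
    have h2 : (t⁻¹ • x) ⬝ᵥ S.mulVec (t⁻¹ • x) = t⁻¹^2 * (x ⬝ᵥ S.mulVec x) := by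
      rw [Matrix.mulVec_smul, dotProduct_smul, smul_dotProduct, smul_eq_mul,
        smul_eq_mul]
      ring
    rw [h2] at h1
    have h3 := mul_le_mul_of_nonneg_left h1 (le_of_lt (by positivity : (0:ℝ) < t^2))
    calc ε * ∑ i, (x i)^2 = t^2 * ε := by rw [← hts]; ring
    _ ≤ t^2 * (t⁻¹^2 * (x ⬝ᵥ S.mulVec x)) := h3
    _ = x ⬝ᵥ S.mulVec x := by field_simp


lemma sector (ℓ v c : ℝ) (hℓ : 0 < ℓ) (h : |v - c| ≤ ℓ) :
    ((if |v| ≤ ℓ then v else ℓ * v / |v|) - v) *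
      (c + ((if |v| ≤ ℓ then v else ℓ * v / |v|) - v)) ≤ 0 := by
  obtain ⟨h1, h2⟩ := abs_le.mp h
  by_cases hv : |v| ≤ ℓ
  · simp [hv]
  · push_neg at hv
    rw [if_neg (not_le.mpr hv)]
    rcases le_or_gt 0 v with hv0 | hv0
    · have hgt : ℓ < v := by rwa [abs_of_nonneg hv0] at hv
      have hvpos : 0 < v := lt_trans hℓ hgt
      rw [abs_of_pos hvpos, mul_div_assoc, div_self hvpos.ne', mul_one]
      have e1 : ℓ - v ≤ 0 := by linarith
      have e2 : 0 ≤ c + (ℓ - v) := by linarith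
      nlinarith
    · have hlt : v < -ℓ := by rw [abs_of_neg hv0] at hv; linarith
      rw [abs_of_neg hv0, show ℓ * v / -v = -ℓ by rw [div_neg, mul_div_assoc, div_self hv0.ne, mul_one]]
      have e1 : 0 ≤ -ℓ - v := by linarith
      have e2 : c + (-ℓ - v) ≤ 0 := by linarith
      nlinarith

theorem stmt6 (n m : ℕ) (hn : 0 < n) (hm : 0 < m)
    (A : Matrix (Fin n) (Fin n) ℝ) (B : Matrix (Fin n) (Fin m) ℝ)
    (K C : Matrix (Fin m) (Fin n) ℝ) (ℓ : ℝ) (hℓ : 0 < ℓ)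
    (P : Matrix (Fin n) (Fin n) ℝ) (hP : P.PosDef)
    (D : Matrix (Fin m) (Fin m) ℝ) (hDdiag : D.IsDiag) (hDpos : ∀ i, 0 < D i i)
    (hM1 : (-(M1mat A B K C P D)).PosDef) (hM2 : (M2mat K C P ℓ).PosSemidef) :
    ∃ α : ℝ, 0 < α ∧ ∀ z : Fin n → ℝ, z ⬝ᵥ P.mulVec z ≤ 1 →
      2 * (z ⬝ᵥ P.mulVec (A.mulVec z + B.mulVec (satv ℓ (K.mulVec z)))) ≤
        -α * (∑ i, (z i) ^ 2) := by
  haveI : Nonempty (Fin n ⊕ Fin m) := ⟨Sum.inl ⟨0, hn⟩⟩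
  have hPt : Pᵀ = P := by
    rw [← P.conjTranspose_eq_transpose_of_trivial]; exact hP.1
  have sym_dot : ∀ u v : Fin n → ℝ, u ⬝ᵥ P.mulVec v = v ⬝ᵥ P.mulVec u := by
    intro u v
    rw [dotProduct_mulVec, show u ᵥ* P = P *ᵥ u by have h := vecMul_transpose P u; rwa [hPt] at h,
      dotProduct_comm]
  obtain ⟨ε, hε, hlow⟩ := posdef_lower hM1
  refine ⟨ε, hε, fun z hz => ?_⟩
  set u : Fin m → ℝ := K.mulVec z with hu
  set φ : Fin m → ℝ := fun k => satv ℓ u k - u k with hφ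
  set x : Fin n ⊕ Fin m → ℝ := Sum.elim z φ with hx
  -- Step 1: |((K - C) *ᵥ z) k| ≤ ℓ for all k
  have hKC : ∀ k : Fin m, |((K - C).mulVec z) k| ≤ ℓ := by
    intro k
    set s : ℝ := ((K - C).mulVec z) k with hs
    have hq : ∀ t : ℝ, 0 ≤ ℓ ^ 2 * (t * t) + (2 * s) * t + z ⬝ᵥ P.mulVec z := by
      intro t
      have h0 := hM2.dotProduct_mulVec_nonneg (Sum.elim z (Pi.single k t))
      simp only [star_trivial] at h0
      rw [M2mat, fromBlocks_mulVec, Sum.elim_comp_inl, Sum.elim_comp_inr,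
        sumElim_dotProduct_sumElim, dotProduct_add, dotProduct_add,
        dotProduct_mulVec z (K - C)ᵀ, vecMul_transpose, dotProduct_single,
        single_dotProduct, smul_mulVec, one_mulVec, dotProduct_smul,
        single_dotProduct, Pi.single_eq_same, smul_eq_mul] at h0
      linarith
    have hd := discrim_le_zero hq
    rw [discrim] at hd
    have hzP0 : z ⬝ᵥ P.mulVec z ≤ 1 := hz
    nlinarith [abs_nonneg s, sq_abs s, hℓ.le]
  -- Step 2: sector condition
  have hsect : ∀ k : Fin m, φ k * ((C.mulVec z) k + φ k) ≤ 0 := by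
    intro k
    have h1 : |u k - (C.mulVec z) k| ≤ ℓ := by
      have : ((K - C).mulVec z) k = u k - (C.mulVec z) k := by
        rw [sub_mulVec]; simp [hu]
      rw [← this]; exact hKC k
    have := sector ℓ (u k) ((C.mulVec z) k) hℓ h1
    simpa [hφ, satv] using this
  -- Step 3: φ ⬝ᵥ D *ᵥ (C z + φ) ≤ 0
  have hDmul : ∀ (w : Fin m → ℝ) (k : Fin m), (D.mulVec w) k = D k k * w k := by
    intro w k
    rw [mulVec, dotProduct]
    exact Finset.sum_eq_single k (fun j _ hj => by rw [hDdiag hj.symm, zero_mul])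
      (fun h => absurd (Finset.mem_univ k) h)
  have hDneg : φ ⬝ᵥ D.mulVec (C.mulVec z + φ) ≤ 0 := by
    rw [dotProduct]
    apply Finset.sum_nonpos
    intro k _
    rw [hDmul]
    calc φ k * (D k k * (C.mulVec z + φ) k) = D k k * (φ k * ((C.mulVec z) k + φ k)) := by
          simp [Pi.add_apply]; ring
    _ ≤ 0 := mul_nonpos_of_nonneg_of_nonpos (hDpos k).le (hsect k)
  -- Step 4: key identity
  set a1 : ℝ := z ⬝ᵥ P.mulVec (A.mulVec z) with ha1
  set a2 : ℝ := z ⬝ᵥ P.mulVec (B.mulVec u) with ha2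
  set a3 : ℝ := z ⬝ᵥ P.mulVec (B.mulVec φ) with ha3
  set a4 : ℝ := φ ⬝ᵥ D.mulVec (C.mulVec z) with ha4
  set a5 : ℝ := φ ⬝ᵥ D.mulVec φ with ha5
  have trans_dot : ∀ {a b : ℕ} (M : Matrix (Fin a) (Fin b) ℝ) (v : Fin b → ℝ) (w : Fin a → ℝ),
      v ⬝ᵥ Mᵀ.mulVec w = (M.mulVec v) ⬝ᵥ w := by
    intro a b M v w
    rw [dotProduct_mulVec, vecMul_transpose]
  have hxM1 : x ⬝ᵥ (M1mat A B K C P D).mulVec x = 2*a1 + 2*a2 + 2*a3 - 2*a4 - 2*a5 := by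
    rw [M1mat, fromBlocks_mulVec, hx, Sum.elim_comp_inl, Sum.elim_comp_inr,
      sumElim_dotProduct_sumElim]
    simp only [add_mulVec, sub_mulVec, dotProduct_add, dotProduct_sub, ← mulVec_mulVec,
      smul_mulVec, dotProduct_smul, smul_eq_mul]
    have t1 : z ⬝ᵥ (A + B * K)ᵀ.mulVec (P.mulVec z) = a1 + a2 := by
      rw [trans_dot, sym_dot]
      simp only [add_mulVec, ← mulVec_mulVec, mulVec_add, dotProduct_add]; rfl
    have t2' : z ⬝ᵥ P.mulVec (A.mulVec z + B.mulVec (K.mulVec z)) = a1 + a2 := by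
      simp only [mulVec_add, dotProduct_add]; rfl
    have t4 : z ⬝ᵥ (D * C)ᵀ.mulVec φ = a4 := by
      rw [trans_dot, dotProduct_comm, ← mulVec_mulVec]
    have t5 : φ ⬝ᵥ Bᵀ.mulVec (P.mulVec z) = a3 := by
      rw [trans_dot, sym_dot]
    rw [t1]
    linear_combination t2' + ha3.symm + t5 - t4 - ha4.symm - 2 * ha5.symm
  have hkey : 2 * (z ⬝ᵥ P.mulVec (A.mulVec z + B.mulVec (satv ℓ u))) =
      x ⬝ᵥ (M1mat A B K C P D).mulVec x + 2 * (a4 + a5) := by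
    have hsat : satv ℓ u = fun k => u k + φ k := by
      funext k; simp [hφ]
    rw [hsat, hxM1]
    have : B.mulVec (fun k => u k + φ k) = B.mulVec u + B.mulVec φ := by
      rw [← mulVec_add]; rfl
    rw [this]
    simp only [mulVec_add, dotProduct_add]
    linear_combination (-2 : ℝ) * ha1 - 2 * ha2 - 2 * ha3
  -- Step 5: combine
  have hM1bound : x ⬝ᵥ (M1mat A B K C P D).mulVec x ≤ -ε * ∑ i, (x i)^2 := by
    have := hlow x
    rw [neg_mulVec, dotProduct_neg] at this
    linarith
  have hsum : ∑ i, (z i)^2 ≤ ∑ i, (x i)^2 := by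
    rw [Fintype.sum_sum_type]
    simp only [hx, Sum.elim_inl, Sum.elim_inr]
    have : (0:ℝ) ≤ ∑ k : Fin m, (φ k)^2 := Finset.sum_nonneg fun k _ => sq_nonneg _
    linarith
  have ha45 : a4 + a5 ≤ 0 := by
    have : a4 + a5 = φ ⬝ᵥ D.mulVec (C.mulVec z + φ) := by
      rw [mulVec_add, dotProduct_add, ha4, ha5]
    linarith [hDneg, this.ge, this.le]
  calc 2 * (z ⬝ᵥ P.mulVec (A.mulVec z + B.mulVec (satv ℓ u)))
      = x ⬝ᵥ (M1mat A B K C P D).mulVec x + 2 * (a4 + a5) := hkey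
    _ ≤ -ε * ∑ i, (x i)^2 := by linarith
    _ ≤ -ε * ∑ i, (z i)^2 := by
        apply mul_le_mul_of_nonpos_left hsum (by linarith)
end

section
/- Let n, m ∈ ℕ*, A ∈ ℝ^{n×n}, B ∈ ℝ^{n×m}, K, C ∈ ℝ^{m×n}, ℓ > 0, let P ∈ ℝ^{n×n} be symmetric positive definite and D ∈ ℝ^{m×m} diagonal with positive diagonal entries, and assume M1 < 0 and M2 ≥ 0. Then there exist M ≥ 1 and a > 0 such that every solution z : [0,∞) → ℝⁿ of the saturated closed-loop system ż = Az + B·sat_ℓ(Kz) whose initial condition satisfies z(0)ᵀP z(0) ≤ 1 satisfies z(t)ᵀP z(t) ≤ 1 and |z(t)| ≤ M·e^{−a t}·|z(0)| for all t ≥ 0, where |·| is the Euclidean norm. -/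
open Matrix

/-- Euclidean norm on `ℝⁿ`. -/
noncomputable def euclNorm {n : ℕ} (z : Fin n → ℝ) : ℝ :=
  Real.sqrt (∑ i, (z i) ^ 2)

/-- Quadratic-form two-sided bounds for a positive definite matrix, obtained by
compactness of the Euclidean unit sphere. -/
lemma quad_bounds {ι : Type*} [Fintype ι] [DecidableEq ι] [Nonempty ι]
    (Q : Matrix ι ι ℝ) (hQ : Q.PosDef) :
    ∃ c C : ℝ, 0 < c ∧ c ≤ C ∧ ∀ x : ι → ℝ,
      c * ∑ i, x i ^ 2 ≤ x ⬝ᵥ Q *ᵥ x ∧ x ⬝ᵥ Q *ᵥ x ≤ C * ∑ i, x i ^ 2 := by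
  set S : (ι → ℝ) → ℝ := fun x => ∑ i, x i ^ 2 with hS
  set q : (ι → ℝ) → ℝ := fun x => x ⬝ᵥ Q *ᵥ x with hq
  have hScont : Continuous S := by
    exact continuous_finset_sum _ fun i _ => (continuous_apply i).pow 2
  have hqcont : Continuous q := by
    simp only [hq, dotProduct, Matrix.mulVec]
    exact continuous_finset_sum _ fun i _ => (continuous_apply i).mul
      (continuous_finset_sum _ fun j _ => continuous_const.mul (continuous_apply j))
  have hT : IsCompact (S ⁻¹' {1}) := by
    apply Metric.isCompact_of_isClosed_isBounded
    · exact (isClosed_singleton).preimage hScont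
    · apply Bornology.IsBounded.subset (Metric.isBounded_closedBall (x := (0 : ι → ℝ)) (r := 1))
      intro x hx
      simp only [Set.mem_preimage, Set.mem_singleton_iff] at hx
      simp only [Metric.mem_closedBall, dist_zero_right]
      rw [pi_norm_le_iff_of_nonneg zero_le_one]
      intro i
      rw [Real.norm_eq_abs, ← Real.sqrt_one, ← Real.sqrt_sq_eq_abs]
      apply Real.sqrt_le_sqrt
      rw [← hx]
      exact Finset.single_le_sum (f := fun i => x i ^ 2) (fun j _ => sq_nonneg _) (Finset.mem_univ i)
  have hTne : (S ⁻¹' {1}).Nonempty := by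
    refine ⟨Pi.single (Classical.arbitrary ι) 1, ?_⟩
    simp only [Set.mem_preimage, Set.mem_singleton_iff, hS]
    rw [Finset.sum_eq_single (Classical.arbitrary ι)]
    · simp
    · intro b _ hb; simp [Pi.single_apply, hb]
    · simp
  obtain ⟨x₀, hx₀T, hx₀min⟩ := hT.exists_isMinOn hTne hqcont.continuousOn
  obtain ⟨x₁, hx₁T, hx₁max⟩ := hT.exists_isMaxOn hTne hqcont.continuousOn
  have hSpos : ∀ x : ι → ℝ, x ≠ 0 → 0 < S x := by
    intro x hx
    have hne : ∃ i, x i ≠ 0 := by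
      by_contra hcon
      push_neg at hcon
      exact hx (funext hcon)
    obtain ⟨i, hi⟩ := hne
    exact Finset.sum_pos' (fun j _ => sq_nonneg (x j))
      ⟨i, Finset.mem_univ i, by positivity⟩
  have hx₀ne : x₀ ≠ 0 := by
    intro h
    rw [Set.mem_preimage, Set.mem_singleton_iff, h] at hx₀T
    simp [hS] at hx₀T
  have hc : 0 < q x₀ := by
    have := hQ.dotProduct_mulVec_pos hx₀ne; rwa [star_trivial] at this
  have hscale : ∀ x : ι → ℝ, q x₀ * S x ≤ q x ∧ q x ≤ q x₁ * S x := by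
    intro x
    rcases eq_or_ne x 0 with rfl | hx
    · simp [hq, hS, Matrix.mulVec_zero, dotProduct_zero]
    · have hSx := hSpos x hx
      set r := Real.sqrt (S x) with hr
      have hrpos : 0 < r := Real.sqrt_pos.mpr hSx
      have hr2 : r ^ 2 = S x := Real.sq_sqrt hSx.le
      set y := r⁻¹ • x with hy
      have hxy : x = r • y := by
        rw [hy, smul_smul, mul_inv_cancel₀ hrpos.ne', one_smul]
      have hSy : S y ∈ ({1} : Set ℝ) := by
        simp only [hS, Set.mem_singleton_iff, hy, Pi.smul_apply, smul_eq_mul, mul_pow,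
          ← Finset.mul_sum]
        have h2' : (∑ i, x i ^ 2) = r ^ 2 := hr2.symm
        rw [h2', inv_pow]
        field_simp
      have hqx : q x = r ^ 2 * q y := by
        rw [hxy, hq]
        simp only [Matrix.mulVec_smul, smul_dotProduct, dotProduct_smul, smul_eq_mul]
        ring
      have h1 : q x₀ ≤ q y := hx₀min hSy
      have h2 : q y ≤ q x₁ := hx₁max hSy
      constructor
      · rw [hqx, ← hr2]
        nlinarith [sq_nonneg r]
      · rw [hqx, ← hr2]
        nlinarith [sq_nonneg r]
  exact ⟨q x₀, q x₁, hc, hx₀min hx₁T, fun x => hscale x⟩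

lemma tr_dot {n m : ℕ} (M : Matrix (Fin n) (Fin m) ℝ) (v : Fin m → ℝ) (w : Fin n → ℝ) :
    v ⬝ᵥ Mᵀ *ᵥ w = (M *ᵥ v) ⬝ᵥ w := by
  rw [Matrix.dotProduct_mulVec, Matrix.vecMul_transpose]

/-- Key algebraic identity for the Lyapunov derivative. -/
lemma key_id {n m : ℕ} (A : Matrix (Fin n) (Fin n) ℝ) (B : Matrix (Fin n) (Fin m) ℝ)
    (K C : Matrix (Fin m) (Fin n) ℝ) (P : Matrix (Fin n) (Fin n) ℝ)
    (D : Matrix (Fin m) (Fin m) ℝ) (z : Fin n → ℝ) (φ : Fin m → ℝ) :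
    ((A + B * K) *ᵥ z + B *ᵥ φ) ⬝ᵥ P *ᵥ z
      + z ⬝ᵥ P *ᵥ ((A + B * K) *ᵥ z + B *ᵥ φ)
    = (Sum.elim z φ) ⬝ᵥ (M1mat A B K C P D) *ᵥ (Sum.elim z φ)
      + 2 * (φ ⬝ᵥ D *ᵥ (C *ᵥ z + φ)) := by
  simp only [M1mat, Matrix.fromBlocks_mulVec, sumElim_dotProduct_sumElim,
    Matrix.add_mulVec, Matrix.sub_mulVec, ← Matrix.mulVec_mulVec,
    Matrix.smul_mulVec, Matrix.mulVec_add, dotProduct_add, add_dotProduct,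
    dotProduct_sub, sub_dotProduct, dotProduct_smul, tr_dot, smul_eq_mul,
    Sum.elim_comp_inl, Sum.elim_comp_inr]
  rw [dotProduct_comm (D *ᵥ (C *ᵥ z)) φ]
  ring

/-- Scalar sector condition for the deadzone nonlinearity. -/
lemma sector_scalar {ℓ u c : ℝ} (hℓ : 0 < ℓ) (h : |u - c| ≤ ℓ) :
    ((if |u| ≤ ℓ then u else ℓ * u / |u|) - u) *
      (((if |u| ≤ ℓ then u else ℓ * u / |u|) - u) + c) ≤ 0 := by
  rcases le_or_gt |u| ℓ with hu | hu
  · simp [hu]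
  · rw [if_neg (not_le.mpr hu)]
    rw [abs_le] at h
    rcases lt_or_ge u 0 with hneg | hpos
    · have habs : |u| = -u := abs_of_neg hneg
      have hul : u < -ℓ := by rw [habs] at hu; linarith
      have hu0 : u ≠ 0 := by linarith
      have hsat : ℓ * u / |u| = -ℓ := by
        rw [habs, div_neg, mul_div_assoc, div_self hu0, mul_one]
      rw [hsat]
      apply mul_nonpos_of_nonneg_of_nonpos
      · linarith
      · linarith
    · have habs : |u| = u := abs_of_nonneg hpos
      have hul : ℓ < u := by rwa [habs] at hu
      have hu0 : u ≠ 0 := by linarith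
      have hsat : ℓ * u / |u| = ℓ := by
        rw [habs, mul_div_assoc, div_self hu0, mul_one]
      rw [hsat]
      apply mul_nonpos_of_nonpos_of_nonneg
      · linarith
      · linarith

/-- Derivative of the quadratic Lyapunov function along a differentiable curve. -/
lemma deriv_quad {n : ℕ} (P : Matrix (Fin n) (Fin n) ℝ) {z : ℝ → Fin n → ℝ}
    {v : Fin n → ℝ} {t : ℝ} (hz : HasDerivAt z v t) :
    HasDerivAt (fun s => z s ⬝ᵥ P *ᵥ z s) (v ⬝ᵥ P *ᵥ z t + z t ⬝ᵥ P *ᵥ v) t := by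
  have hzi : ∀ i, HasDerivAt (fun s => z s i) (v i) t := hasDerivAt_pi.mp hz
  have hsum : ∀ i : Fin n, HasDerivAt (fun s => ∑ j, P i j * z s j) (∑ j, P i j * v j) t :=
    fun i => HasDerivAt.fun_sum fun j _ => (hzi j).const_mul (P i j)
  have hmain : HasDerivAt (fun s => ∑ i, z s i * ∑ j, P i j * z s j)
      (∑ i, (v i * ∑ j, P i j * z t j + z t i * ∑ j, P i j * v j)) t :=
    HasDerivAt.fun_sum fun i _ => (hzi i).mul (hsum i)
  have hfe : (fun s => z s ⬝ᵥ P *ᵥ z s) = fun s => ∑ i, z s i * ∑ j, P i j * z s j := by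
    funext s
    simp [dotProduct, Matrix.mulVec]
  have hde : v ⬝ᵥ P *ᵥ z t + z t ⬝ᵥ P *ᵥ v
      = ∑ i, (v i * ∑ j, P i j * z t j + z t i * ∑ j, P i j * v j) := by
    simp [dotProduct, Matrix.mulVec, Finset.sum_add_distrib]
  rw [hfe, hde]
  exact hmain

/-- Dot product against a diagonal matrix. -/
lemma diag_dot {m : ℕ} (D : Matrix (Fin m) (Fin m) ℝ) (hD : D.IsDiag)
    (φ w : Fin m → ℝ) : φ ⬝ᵥ D *ᵥ w = ∑ k, D k k * (φ k * w k) := by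
  simp only [dotProduct, Matrix.mulVec]
  refine Finset.sum_congr rfl fun k _ => ?_
  rw [Finset.sum_eq_single k]
  · ring
  · intro b _ hb
    rw [hD (Ne.symm hb)]  -- careful: need D k b = 0 for b ≠ k
    ring
  · intro h; exact absurd (Finset.mem_univ k) h

/-- If `M2 ≥ 0` and `zᵀPz ≤ 1` then `|((K-C)z)_k| ≤ ℓ` for each `k`. -/
lemma m2_bound {n m : ℕ} {K C : Matrix (Fin m) (Fin n) ℝ} {P : Matrix (Fin n) (Fin n) ℝ}
    {ℓ : ℝ} (hℓ : 0 < ℓ) (hM2 : (M2mat K C P ℓ).PosSemidef)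
    (z : Fin n → ℝ) (hz : z ⬝ᵥ P *ᵥ z ≤ 1) :
    ∀ k, |((K - C) *ᵥ z) k| ≤ ℓ := by
  set v := (K - C) *ᵥ z with hv
  have hℓ2 : (0:ℝ) < ℓ ^ 2 := by positivity
  have h0 := hM2.dotProduct_mulVec_nonneg (Sum.elim z ((-(ℓ^2)⁻¹) • v))
  have hexp : (Sum.elim z ((-(ℓ^2)⁻¹) • v)) ⬝ᵥ (M2mat K C P ℓ) *ᵥ
        (Sum.elim z ((-(ℓ^2)⁻¹) • v))
      = z ⬝ᵥ P *ᵥ z - (ℓ^2)⁻¹ * (v ⬝ᵥ v) := by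
    simp only [M2mat, Matrix.fromBlocks_mulVec, sumElim_dotProduct_sumElim,
      Sum.elim_comp_inl, Sum.elim_comp_inr, dotProduct_add, Matrix.smul_mulVec,
      Matrix.one_mulVec, Matrix.mulVec_smul, tr_dot, smul_dotProduct, dotProduct_smul,
      smul_eq_mul, ← hv]
    field_simp
    ring
  rw [star_trivial, hexp] at h0
  have hs : v ⬝ᵥ v ≤ ℓ ^ 2 := by
    have h1 : (ℓ^2)⁻¹ * (v ⬝ᵥ v) ≤ 1 := by linarith
    calc v ⬝ᵥ v = ℓ^2 * ((ℓ^2)⁻¹ * (v ⬝ᵥ v)) := by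
          field_simp
      _ ≤ ℓ^2 * 1 := by
          apply mul_le_mul_of_nonneg_left h1 hℓ2.le
      _ = ℓ^2 := mul_one _
  intro k
  have hk : (v k) ^ 2 ≤ v ⬝ᵥ v := by
    have hvv : v ⬝ᵥ v = ∑ i, (v i) ^ 2 := by
      simp [dotProduct, sq]
    rw [hvv]
    exact Finset.single_le_sum (f := fun i => v i ^ 2) (fun j _ => sq_nonneg _)
      (Finset.mem_univ k)
  rw [← Real.sqrt_sq_eq_abs, ← Real.sqrt_sq hℓ.le]
  exact Real.sqrt_le_sqrt (le_trans hk hs)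

theorem stmt7 (n m : ℕ) (hn : 0 < n) (hm : 0 < m)
    (A : Matrix (Fin n) (Fin n) ℝ) (B : Matrix (Fin n) (Fin m) ℝ)
    (K C : Matrix (Fin m) (Fin n) ℝ) (ℓ : ℝ) (hℓ : 0 < ℓ)
    (P : Matrix (Fin n) (Fin n) ℝ) (hP : P.PosDef)
    (D : Matrix (Fin m) (Fin m) ℝ) (hDdiag : D.IsDiag) (hDpos : ∀ i, 0 < D i i)
    (hM1 : (-(M1mat A B K C P D)).PosDef) (hM2 : (M2mat K C P ℓ).PosSemidef) :
    ∃ (M a : ℝ), 1 ≤ M ∧ 0 < a ∧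
      ∀ z : ℝ → (Fin n → ℝ),
        (∀ t : ℝ, 0 ≤ t →
          HasDerivAt z (A.mulVec (z t) + B.mulVec (satv ℓ (K.mulVec (z t)))) t) →
        z 0 ⬝ᵥ P.mulVec (z 0) ≤ 1 →
        ∀ t : ℝ, 0 ≤ t →
          z t ⬝ᵥ P.mulVec (z t) ≤ 1 ∧
          euclNorm (z t) ≤ M * Real.exp (-a * t) * euclNorm (z 0) := by
  haveI : Nonempty (Fin n) := ⟨⟨0, hn⟩⟩
  haveI : Nonempty (Fin n ⊕ Fin m) := ⟨Sum.inl ⟨0, hn⟩⟩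
  obtain ⟨c1, C1, hc1, hc1C1, hPbd⟩ := quad_bounds P hP
  obtain ⟨c2, C2, hc2, _, hM1bd⟩ := quad_bounds _ hM1
  have hC1 : 0 < C1 := lt_of_lt_of_le hc1 hc1C1
  set a₀ : ℝ := c2 / C1 with ha₀
  have ha₀pos : 0 < a₀ := div_pos hc2 hC1
  refine ⟨Real.sqrt (C1 / c1), a₀ / 2, ?_, by positivity, ?_⟩
  · rw [Real.one_le_sqrt]
    exact (one_le_div hc1).mpr hc1C1
  intro z hzde hz0 t ht
  set g : ℝ → ℝ := fun s => z s ⬝ᵥ P *ᵥ z s with hg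
  set Dg : ℝ → ℝ := fun s =>
    (A *ᵥ z s + B *ᵥ satv ℓ (K *ᵥ z s)) ⬝ᵥ P *ᵥ z s
      + z s ⬝ᵥ P *ᵥ (A *ᵥ z s + B *ᵥ satv ℓ (K *ᵥ z s)) with hDg
  have hgd : ∀ s, 0 ≤ s → HasDerivAt g (Dg s) s := fun s hs => deriv_quad P (hzde s hs)
  -- derivative bound whenever the state is inside the ellipsoid
  have hkey : ∀ s : ℝ, g s ≤ 1 → Dg s ≤ -a₀ * g s := by
    intro s hgs
    set φ : Fin m → ℝ := satv ℓ (K *ᵥ z s) - K *ᵥ z s with hφ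
    have hrw : A *ᵥ z s + B *ᵥ satv ℓ (K *ᵥ z s) = (A + B * K) *ᵥ z s + B *ᵥ φ := by
      rw [hφ, Matrix.mulVec_sub, Matrix.add_mulVec, ← Matrix.mulVec_mulVec]
      abel
    have hid := key_id A B K C P D (z s) φ
    have hsec : φ ⬝ᵥ D *ᵥ (C *ᵥ z s + φ) ≤ 0 := by
      rw [diag_dot D hDdiag]
      apply Finset.sum_nonpos
      intro k _
      have hb := m2_bound hℓ hM2 (z s) hgs k
      rw [Matrix.sub_mulVec] at hb
      have habs : |(K *ᵥ z s) k - (C *ᵥ z s) k| ≤ ℓ := hb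
      have hsc := sector_scalar hℓ habs
      have hφk : φ k = (if |(K *ᵥ z s) k| ≤ ℓ then (K *ᵥ z s) k
          else ℓ * (K *ᵥ z s) k / |(K *ᵥ z s) k|) - (K *ᵥ z s) k := by
        simp [hφ, satv]
      have hterm : φ k * ((C *ᵥ z s + φ) k) ≤ 0 := by
        have : (C *ᵥ z s + φ) k = φ k + (C *ᵥ z s) k := by
          simp [add_comm]
        rw [this, hφk]
        exact hsc
      exact mul_nonpos_of_nonneg_of_nonpos (hDpos k).le hterm
    have hw := (hM1bd (Sum.elim (z s) φ)).1
    have hneg : Sum.elim (z s) φ ⬝ᵥ (M1mat A B K C P D) *ᵥ Sum.elim (z s) φ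
        ≤ -(c2 * ∑ i, Sum.elim (z s) φ i ^ 2) := by
      have heq : Sum.elim (z s) φ ⬝ᵥ (-(M1mat A B K C P D)) *ᵥ Sum.elim (z s) φ
          = -(Sum.elim (z s) φ ⬝ᵥ (M1mat A B K C P D) *ᵥ Sum.elim (z s) φ) := by
        rw [Matrix.neg_mulVec, dotProduct_neg]
      rw [heq] at hw
      linarith
    have hsumsplit : (∑ i, Sum.elim (z s) φ i ^ 2)
        = (∑ i, z s i ^ 2) + ∑ k, φ k ^ 2 := by
      rw [Fintype.sum_sum_type]
      simp
    have hzPz : g s ≤ C1 * ∑ i, z s i ^ 2 := (hPbd (z s)).2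
    have hφnn : (0:ℝ) ≤ ∑ k, φ k ^ 2 := Finset.sum_nonneg fun k _ => sq_nonneg _
    have hDgval : Dg s = Sum.elim (z s) φ ⬝ᵥ (M1mat A B K C P D) *ᵥ Sum.elim (z s) φ
        + 2 * (φ ⬝ᵥ D *ᵥ (C *ᵥ z s + φ)) := by
      rw [hDg]
      simp only [hrw]
      exact hid
    have hstep : Dg s ≤ -(c2 * ∑ i, z s i ^ 2) := by
      rw [hDgval]
      have := hneg
      rw [hsumsplit] at this
      nlinarith
    have hfin : a₀ * g s ≤ c2 * ∑ i, z s i ^ 2 := by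
      have h1 : a₀ * g s ≤ a₀ * (C1 * ∑ i, z s i ^ 2) :=
        mul_le_mul_of_nonneg_left hzPz ha₀pos.le
      have h2 : a₀ * (C1 * ∑ i, z s i ^ 2) = c2 * ∑ i, z s i ^ 2 := by
        rw [ha₀]
        field_simp
      linarith
    linarith
  -- invariance of the ellipsoid
  have hinv : ∀ s : ℝ, 0 ≤ s → g s ≤ 1 := by
    intro s hs
    have hcont : ContinuousOn g (Set.Icc 0 s) := fun x hx =>
      ((hgd x hx.1).continuousAt).continuousWithinAt
    have hder : ∀ x ∈ Set.Ico 0 s, HasDerivWithinAt g (Dg x) (Set.Ici x) x := fun x hx =>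
      (hgd x hx.1).hasDerivWithinAt
    have hB : ∀ x : ℝ, HasDerivAt (fun _ : ℝ => (1:ℝ)) ((fun _ : ℝ => (0:ℝ)) x) x :=
      fun x => hasDerivAt_const x 1
    have hbound : ∀ x ∈ Set.Ico 0 s, g x = (fun _ : ℝ => (1:ℝ)) x →
        Dg x < (fun _ : ℝ => (0:ℝ)) x := by
      intro x _ he
      simp only at he ⊢
      have := hkey x (le_of_eq he)
      rw [he] at this
      linarith
    exact image_le_of_deriv_right_lt_deriv_boundary hcont hder hz0 hB hbound
      (Set.right_mem_Icc.mpr hs)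
  -- Gronwall decay
  have hdec : ∀ s : ℝ, 0 ≤ s → g s ≤ g 0 * Real.exp (-a₀ * s) := by
    intro s hs
    have hcont : ContinuousOn g (Set.Icc 0 s) := fun x hx =>
      ((hgd x hx.1).continuousAt).continuousWithinAt
    have hf' : ∀ x ∈ Set.Ico 0 s, ∀ r, Dg x < r →
        ∃ᶠ y in nhdsWithin x (Set.Ioi x), (y - x)⁻¹ * (g y - g x) < r := by
      intro x hx r hr
      have := ((hgd x hx.1).hasDerivWithinAt (s := Set.Ici x)).liminf_right_slope_le hr
      refine this.mono fun y hy => ?_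
      rw [slope_def_field] at hy
      rwa [inv_mul_eq_div]
    have hbound' : ∀ x ∈ Set.Ico 0 s, Dg x ≤ -a₀ * g x + 0 := by
      intro x hx
      rw [add_zero]
      exact hkey x (hinv x hx.1)
    have H := le_gronwallBound_of_liminf_deriv_right_le hcont hf' le_rfl hbound' s
      (Set.right_mem_Icc.mpr hs)
    rwa [gronwallBound_ε0, sub_zero] at H
  refine ⟨hinv t ht, ?_⟩
  have h1 : c1 * ∑ i, z t i ^ 2 ≤ g t := (hPbd (z t)).1
  have h2 : g 0 ≤ C1 * ∑ i, z 0 i ^ 2 := (hPbd (z 0)).2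
  have h3 := hdec t ht
  have hE : (0:ℝ) < Real.exp (-a₀ * t) := Real.exp_pos _
  have hS0 : (0:ℝ) ≤ ∑ i, z 0 i ^ 2 := Finset.sum_nonneg fun i _ => sq_nonneg _
  have h4 : (∑ i, z t i ^ 2) ≤ (C1 / c1) * Real.exp (-a₀ * t) * ∑ i, z 0 i ^ 2 := by
    have h5 : g 0 * Real.exp (-a₀ * t) ≤ C1 * (∑ i, z 0 i ^ 2) * Real.exp (-a₀ * t) :=
      mul_le_mul_of_nonneg_right h2 hE.le
    have h6 : c1 * ∑ i, z t i ^ 2 ≤ C1 * (∑ i, z 0 i ^ 2) * Real.exp (-a₀ * t) := by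
      linarith
    rw [div_mul_eq_mul_div, div_mul_eq_mul_div, le_div_iff₀ hc1]
    nlinarith
  have hEsq : Real.exp (-a₀ * t) = (Real.exp (-(a₀ / 2) * t)) ^ 2 := by
    rw [sq, ← Real.exp_add]
    congr 1
    ring
  show Real.sqrt (∑ i, z t i ^ 2) ≤ Real.sqrt (C1 / c1) * Real.exp (-(a₀ / 2) * t)
      * Real.sqrt (∑ i, z 0 i ^ 2)
  calc Real.sqrt (∑ i, z t i ^ 2)
      ≤ Real.sqrt ((C1 / c1) * Real.exp (-a₀ * t) * ∑ i, z 0 i ^ 2) :=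
        Real.sqrt_le_sqrt h4
    _ = Real.sqrt (C1 / c1) * Real.exp (-(a₀ / 2) * t) * Real.sqrt (∑ i, z 0 i ^ 2) := by
        rw [Real.sqrt_mul (by positivity), Real.sqrt_mul (by positivity), hEsq,
          Real.sqrt_sq (Real.exp_pos _).le]
end

section
/- Let n ∈ ℕ*, m = 1, A ∈ ℝ^{n×n}, B ∈ ℝ^{n×1}, K, C ∈ ℝ^{1×n}, ℓ > 0, and let P̃ ∈ ℝ^{n×n} be symmetric positive definite such that the matrix M̃1 := [[(A+BK)ᵀP̃ + P̃(A+BK), P̃B − Cᵀ],[BᵀP̃ − C, −2]] ∈ ℝ^{(n+1)×(n+1)} is negative definite. Then: (a) the set { D ≥ 0 : [[D·P̃, (K−C)ᵀ],[K−C, ℓ²]] is positive semidefinite } has a least element; and (b) for every D > 0 such that [[D·P̃, (K−C)ᵀ],[K−C, ℓ²]] is positive semidefinite, there exists α > 0 such that every z ∈ ℝⁿ with D·zᵀP̃z ≤ 1 satisfies 2D·zᵀP̃( Az + B·sat_ℓ(Kz) ) ≤ −α·|z|², where |·| is the Euclidean norm. -/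
open Matrix

/-- Scalar saturation function with level `ℓ`. -/
noncomputable def sats (ℓ : ℝ) (s : ℝ) : ℝ :=
  if |s| ≤ ℓ then s else ℓ * s / |s|

set_option maxHeartbeats 1000000

lemma dot_sym {ι : Type*} [Fintype ι] {P : Matrix ι ι ℝ} (hP : Pᵀ = P)
    (v w : ι → ℝ) : v ⬝ᵥ P *ᵥ w = w ⬝ᵥ P *ᵥ v := by
  rw [dotProduct_mulVec, ← hP, vecMul_transpose, dotProduct_comm, hP]

lemma posdef_quant {ι : Type*} [Fintype ι] [DecidableEq ι] (M : Matrix ι ι ℝ) (hM : M.PosDef) :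
    ∃ ε > 0, ∀ x : ι → ℝ, ε * (∑ i, x i ^ 2) ≤ x ⬝ᵥ M *ᵥ x := by
  cases isEmpty_or_nonempty ι with
  | inl h =>
    refine ⟨1, one_pos, fun x => ?_⟩
    simp [dotProduct, Finset.univ_eq_empty]
  | inr h =>
    set g : (ι → ℝ) → ℝ := fun x => x ⬝ᵥ M *ᵥ x with hg
    have hgc : Continuous g := by
      show Continuous fun x : ι → ℝ => ∑ i, x i * ∑ j, M i j * x j
      exact continuous_finset_sum _ fun i _ => (continuous_apply i).mul
        (continuous_finset_sum _ fun j _ => continuous_const.mul (continuous_apply j))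
    have hsq : Continuous fun x : ι → ℝ => ∑ i, x i ^ 2 :=
      continuous_finset_sum _ fun i _ => (continuous_apply i).pow 2
    set S : Set (ι → ℝ) := {x | ∑ i, x i ^ 2 = 1} with hS
    have hclosed : IsClosed S := isClosed_eq hsq continuous_const
    have hbdd : Bornology.IsBounded S := by
      rw [isBounded_iff_forall_norm_le]
      refine ⟨1, fun x hx => ?_⟩
      rw [pi_norm_le_iff_of_nonneg (by norm_num)]
      intro i
      have h1 : x i ^ 2 ≤ 1 := by
        rw [← hx]
        exact Finset.single_le_sum (fun j _ => sq_nonneg (x j)) (Finset.mem_univ i)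
      rw [Real.norm_eq_abs]
      nlinarith [abs_nonneg (x i), sq_abs (x i)]
    have hcpt : IsCompact S := Metric.isCompact_of_isClosed_isBounded hclosed hbdd
    have hne : S.Nonempty := by
      obtain ⟨i0⟩ := h
      refine ⟨Pi.single i0 1, ?_⟩
      have h2 : ∀ i, (Pi.single i0 1 : ι → ℝ) i ^ 2 = if i = i0 then 1 else 0 := by
        intro i; by_cases hii : i = i0 <;> simp [Pi.single_apply, hii]
      simp [hS, h2]
    obtain ⟨x0, hx0S, hmin⟩ := hcpt.exists_isMinOn hne hgc.continuousOn
    have hx0ne : x0 ≠ 0 := by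
      intro h0
      rw [h0] at hx0S
      simp [hS] at hx0S
    have hε : 0 < g x0 := by simpa [hg] using hM.dotProduct_mulVec_pos hx0ne
    refine ⟨g x0, hε, fun x => ?_⟩
    rcases eq_or_ne x 0 with rfl | hx
    · simp [hg]
    · have hs : 0 < ∑ i, x i ^ 2 := by
        refine Finset.sum_pos' (fun i _ => sq_nonneg (x i)) ?_
        obtain ⟨i, hi⟩ := Function.ne_iff.mp hx
        exact ⟨i, Finset.mem_univ i, pow_two_pos_of_ne_zero hi⟩
      set r : ℝ := Real.sqrt (∑ i, x i ^ 2) with hr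
      have hrpos : 0 < r := Real.sqrt_pos.mpr hs
      have hr2 : r ^ 2 = ∑ i, x i ^ 2 := Real.sq_sqrt hs.le
      set u : ι → ℝ := r⁻¹ • x with hu
      have huS : u ∈ S := by
        simp only [hS, Set.mem_setOf_eq, hu, Pi.smul_apply, smul_eq_mul, mul_pow]
        rw [← Finset.mul_sum, ← hr2]
        field_simp
      have hgu : g x0 ≤ g u := hmin huS
      have hxu : x = r • u := by
        rw [hu, smul_smul, mul_inv_cancel₀ hrpos.ne', one_smul]
      have hgx : x ⬝ᵥ M *ᵥ x = r ^ 2 * g u := by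
        conv_lhs => rw [hxu]
        show (r • u) ⬝ᵥ M *ᵥ (r • u) = _
        simp only [smul_dotProduct, mulVec_smul, dotProduct_smul, smul_eq_mul, hg]
        ring
      rw [hgx, ← hr2]
      nlinarith [hgu, hε, hrpos]

lemma sector_s9 (ℓ s w : ℝ) (hℓ : 0 < ℓ) (hw : |w| ≤ ℓ) :
    (s - sats ℓ s) * (w - sats ℓ s) ≤ 0 := by
  unfold sats
  split_ifs with h
  · simp
  · push_neg at h
    rcases abs_cases s with ⟨h1, h2⟩ | ⟨h1, h2⟩
    · rw [h1] at h ⊢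
      have hs : 0 < s := by linarith
      rw [mul_div_assoc, div_self hs.ne', mul_one]
      have := abs_le.mp hw
      nlinarith
    · rw [h1] at h ⊢
      have hs : s < 0 := h2
      have he : ℓ * s / (-s) = -ℓ := by
        rw [div_neg, mul_div_assoc, div_self hs.ne, mul_one]
      rw [he]
      have := abs_le.mp hw
      nlinarith

theorem stmt9 (n : ℕ) (hn : 0 < n)
    (A : Matrix (Fin n) (Fin n) ℝ) (B : Matrix (Fin n) (Fin 1) ℝ)
    (K C : Matrix (Fin 1) (Fin n) ℝ) (ℓ : ℝ) (hℓ : 0 < ℓ)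
    (Pt : Matrix (Fin n) (Fin n) ℝ) (hPt : Pt.PosDef)
    (hM1 : (-(Matrix.fromBlocks ((A + B * K)ᵀ * Pt + Pt * (A + B * K))
        (Pt * B - Cᵀ) (Bᵀ * Pt - C)
        ((-2 : ℝ) • (1 : Matrix (Fin 1) (Fin 1) ℝ)))).PosDef) :
    (∃ D0 : ℝ, IsLeast {D : ℝ | 0 ≤ D ∧
        (Matrix.fromBlocks (D • Pt) (K - C)ᵀ (K - C)
          (ℓ ^ 2 • (1 : Matrix (Fin 1) (Fin 1) ℝ))).PosSemidef} D0) ∧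
    (∀ D : ℝ, 0 < D →
      (Matrix.fromBlocks (D • Pt) (K - C)ᵀ (K - C)
        (ℓ ^ 2 • (1 : Matrix (Fin 1) (Fin 1) ℝ))).PosSemidef →
      ∃ α : ℝ, 0 < α ∧ ∀ z : Fin n → ℝ, D * (z ⬝ᵥ Pt.mulVec z) ≤ 1 →
        2 * D * (z ⬝ᵥ Pt.mulVec
            (A.mulVec z + B.mulVec (fun _ => sats ℓ (K.mulVec z 0)))) ≤
          -α * (∑ i, (z i) ^ 2)) := by
  classical
  have hPts : Ptᵀ = Pt := by
    have h := hPt.1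
    ext i j
    have := congrFun (congrFun h i) j
    simpa [conjTranspose_apply] using this
  set bc : Fin n → ℝ := fun i => B i 0 with hbc
  have hB : ∀ c : ℝ, B *ᵥ (fun _ => c) = c • bc := by
    intro c
    funext i
    simp [mulVec, dotProduct, hbc, mul_comm]
  have hfin1 : ∀ t w : Fin 1 → ℝ, t ⬝ᵥ w = t 0 * w 0 := by
    intro t w; simp [dotProduct]
  have htrans : ∀ (M : Matrix (Fin 1) (Fin n) ℝ) (w : Fin n → ℝ) (t : Fin 1 → ℝ),
      w ⬝ᵥ Mᵀ *ᵥ t = t ⬝ᵥ (M *ᵥ w) := by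
    intro M w t
    rw [mulVec_transpose, dotProduct_comm, ← dotProduct_mulVec]
  have hblock : ∀ (M1 : Matrix (Fin n) (Fin n) ℝ) (M2 : Matrix (Fin n) (Fin 1) ℝ)
      (M3 : Matrix (Fin 1) (Fin n) ℝ) (M4 : Matrix (Fin 1) (Fin 1) ℝ)
      (z : Fin n → ℝ) (t : Fin 1 → ℝ),
      (Sum.elim z t) ⬝ᵥ (fromBlocks M1 M2 M3 M4) *ᵥ (Sum.elim z t)
        = z ⬝ᵥ M1 *ᵥ z + z ⬝ᵥ M2 *ᵥ t + t ⬝ᵥ M3 *ᵥ z + t ⬝ᵥ M4 *ᵥ t := by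
    intro M1 M2 M3 M4 z t
    rw [fromBlocks_mulVec, sumElim_dotProduct_sumElim]
    simp only [Sum.elim_comp_inl, Sum.elim_comp_inr, dotProduct_add]
    ring
  have hQ : ∀ (D : ℝ) (z : Fin n → ℝ) (c : ℝ),
      (Sum.elim z (fun _ => c)) ⬝ᵥ
        (fromBlocks (D • Pt) (K - C)ᵀ (K - C)
          (ℓ ^ 2 • (1 : Matrix (Fin 1) (Fin 1) ℝ))) *ᵥ (Sum.elim z (fun _ => c))
      = D * (z ⬝ᵥ Pt *ᵥ z) + 2 * c * (((K - C) *ᵥ z) 0) + ℓ ^ 2 * c ^ 2 := by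
    intro D z c
    rw [hblock]
    have h1 : z ⬝ᵥ (D • Pt) *ᵥ z = D * (z ⬝ᵥ Pt *ᵥ z) := by
      rw [smul_mulVec, dotProduct_smul, smul_eq_mul]
    have h2 : z ⬝ᵥ (K - C)ᵀ *ᵥ (fun _ => c) = c * (((K - C) *ᵥ z) 0) := by
      rw [htrans, hfin1]
    have h3 : (fun _ : Fin 1 => c) ⬝ᵥ (K - C) *ᵥ z = c * (((K - C) *ᵥ z) 0) := by
      rw [hfin1]
    have h4 : (fun _ : Fin 1 => c) ⬝ᵥ (ℓ ^ 2 • (1 : Matrix (Fin 1) (Fin 1) ℝ)) *ᵥ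
        (fun _ => c) = ℓ ^ 2 * c ^ 2 := by
      rw [smul_mulVec, one_mulVec, dotProduct_smul, hfin1]
      simp only [smul_eq_mul]
      ring
    rw [h1, h2, h3, h4]; ring
  have hherm : ∀ D : ℝ, (fromBlocks (D • Pt) (K - C)ᵀ (K - C)
      (ℓ ^ 2 • (1 : Matrix (Fin 1) (Fin 1) ℝ))).IsHermitian := by
    intro D
    refine IsHermitian.fromBlocks ?_ ?_ ?_
    · show (D • Pt)ᴴ = D • Pt
      ext i j
      have hji : Pt j i = Pt i j := by
        conv_lhs => rw [← hPts, transpose_apply]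
      simp [conjTranspose_apply, hji]
    · ext i j
      simp [conjTranspose_apply, transpose_apply]
    · show (ℓ ^ 2 • (1 : Matrix (Fin 1) (Fin 1) ℝ))ᴴ = _
      ext i j
      have hij : i = j := Subsingleton.elim i j
      subst hij
      simp [conjTranspose_apply]
  have hPSD_iff : ∀ D : ℝ, (fromBlocks (D • Pt) (K - C)ᵀ (K - C)
      (ℓ ^ 2 • (1 : Matrix (Fin 1) (Fin 1) ℝ))).PosSemidef ↔
      ∀ (z : Fin n → ℝ) (c : ℝ),
        0 ≤ D * (z ⬝ᵥ Pt *ᵥ z) + 2 * c * (((K - C) *ᵥ z) 0) + ℓ ^ 2 * c ^ 2 := by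
    intro D
    constructor
    · intro hpsd z c
      have h := hpsd.dotProduct_mulVec_nonneg (Sum.elim z (fun _ => c))
      have hstar : star (Sum.elim z (fun _ : Fin 1 => c)) = Sum.elim z (fun _ => c) :=
        funext fun i => star_trivial _
      rwa [hstar, hQ] at h
    · intro hfor
      refine .of_dotProduct_mulVec_nonneg (hherm D) fun x => ?_
      have hstar : star x = x := funext fun i => star_trivial _
      have hx : x = Sum.elim (fun i => x (Sum.inl i)) (fun _ : Fin 1 => x (Sum.inr 0)) := by
        funext j
        cases j with
        | inl i => rfl
        | inr i =>
          have : i = 0 := Subsingleton.elim _ _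
          rw [this]; rfl
      rw [hstar, hx, hQ]
      exact hfor _ _
  obtain ⟨ε, hε, hquant⟩ := posdef_quant Pt hPt
  have hp0 : ∀ z : Fin n → ℝ, 0 ≤ z ⬝ᵥ Pt *ᵥ z := by
    intro z
    refine le_trans ?_ (hquant z)
    have h : (0:ℝ) ≤ ∑ i, z i ^ 2 := Finset.sum_nonneg fun i _ => sq_nonneg _
    positivity
  constructor
  · -- part (a)
    set cc : ℝ := ∑ j, ((K - C) 0 j) ^ 2 with hcc
    have hccn : 0 ≤ cc := Finset.sum_nonneg fun j _ => sq_nonneg _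
    have hCS : ∀ z : Fin n → ℝ, (((K - C) *ᵥ z) 0) ^ 2 ≤ cc * (∑ i, z i ^ 2) := by
      intro z
      have h := Finset.sum_mul_sq_le_sq_mul_sq Finset.univ (fun j => (K - C) 0 j) z
      have he : ((K - C) *ᵥ z) 0 = ∑ j, (K - C) 0 j * z j := by
        simp [mulVec, dotProduct]
      rw [he]
      simpa [hcc, sq] using h
    set D0 : ℝ := cc / (ℓ ^ 2 * ε) with hD0
    have hD0n : 0 ≤ D0 := div_nonneg hccn (by positivity)
    have hD0e : D0 * (ℓ ^ 2 * ε) = cc := div_mul_cancel₀ _ (by positivity)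
    have hD0mem : D0 ∈ {D : ℝ | 0 ≤ D ∧
        (Matrix.fromBlocks (D • Pt) (K - C)ᵀ (K - C)
          (ℓ ^ 2 • (1 : Matrix (Fin 1) (Fin 1) ℝ))).PosSemidef} := by
      refine ⟨hD0n, (hPSD_iff D0).mpr ?_⟩
      intro z c
      have hsqn : (0:ℝ) ≤ ∑ i, z i ^ 2 := Finset.sum_nonneg fun i _ => sq_nonneg _
      have hq2 := hCS z
      have hpz : ε * (∑ i, z i ^ 2) ≤ z ⬝ᵥ Pt *ᵥ z := hquant z
      have key : (((K - C) *ᵥ z) 0) ^ 2 ≤ ℓ ^ 2 * (D0 * (z ⬝ᵥ Pt *ᵥ z)) := by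
        have h1 : D0 * (ε * (∑ i, z i ^ 2)) ≤ D0 * (z ⬝ᵥ Pt *ᵥ z) :=
          mul_le_mul_of_nonneg_left hpz hD0n
        nlinarith [hq2, h1, hD0e, sq_nonneg ℓ]
      nlinarith [key, sq_nonneg (((K - C) *ᵥ z) 0 + ℓ ^ 2 * c), hℓ, mul_pos hℓ hℓ]
    set S := {D : ℝ | 0 ≤ D ∧
        (Matrix.fromBlocks (D • Pt) (K - C)ᵀ (K - C)
          (ℓ ^ 2 • (1 : Matrix (Fin 1) (Fin 1) ℝ))).PosSemidef} with hSdef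
    have hne : S.Nonempty := ⟨D0, hD0mem⟩
    have hbdd : BddBelow S := ⟨0, fun d hd => hd.1⟩
    refine ⟨sInf S, ⟨⟨le_csInf hne fun d hd => hd.1, ?_⟩, fun d hd => csInf_le hbdd hd⟩⟩
    rw [hPSD_iff]
    intro z c
    set p := z ⬝ᵥ Pt *ᵥ z with hpdef
    set q := ((K - C) *ᵥ z) 0 with hqdef
    have hpz : 0 ≤ p := hp0 z
    have key : ∀ δ : ℝ, 0 < δ →
        0 ≤ (sInf S + δ) * p + 2 * c * q + ℓ ^ 2 * c ^ 2 := by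
      intro δ hδ
      obtain ⟨d, hdS, hdlt⟩ := exists_lt_of_csInf_lt hne (lt_add_of_pos_right (sInf S) hδ)
      have h1 := (hPSD_iff d).mp hdS.2 z c
      have h2 : d * p ≤ (sInf S + δ) * p := mul_le_mul_of_nonneg_right hdlt.le hpz
      rw [← hpdef, ← hqdef] at h1
      linarith
    by_contra hcon
    push_neg at hcon
    set E := sInf S * p + 2 * c * q + ℓ ^ 2 * c ^ 2 with hE
    have hδpos : 0 < -E / (p + 1) := div_pos (by linarith) (by linarith)
    have h4 := key _ hδpos
    have h5 : -E / (p + 1) * (p + 1) = -E := div_mul_cancel₀ _ (by linarith)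
    nlinarith [h4, h5, hpz, hδpos]
  · -- part (b)
    intro D hD hpsd
    obtain ⟨ε1, hε1, hq1⟩ := posdef_quant _ hM1
    refine ⟨D * ε1, mul_pos hD hε1, fun z hz1 => ?_⟩
    set p := z ⬝ᵥ Pt *ᵥ z with hpdef
    set s := (K *ᵥ z) 0 with hs
    set u := sats ℓ s with hu
    set d := s - u with hd
    set v := (C *ᵥ z) 0 with hv
    clear_value p s u d v
    have hsqn : (0:ℝ) ≤ ∑ i, z i ^ 2 := Finset.sum_nonneg fun i _ => sq_nonneg _
    have hq : ((K - C) *ᵥ z) 0 = s - v := by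
      rw [sub_mulVec, hs, hv]; rfl
    have hfor := (hPSD_iff D).mp hpsd z
    have hdisc := discrim_le_zero (a := ℓ ^ 2) (b := 2 * (s - v)) (c := D * p)
      (fun y => by
        have h0 := hfor y
        rw [hq, ← hpdef] at h0
        nlinarith [h0])
    rw [discrim] at hdisc
    have hql : (s - v) ^ 2 ≤ ℓ ^ 2 * (D * p) := by nlinarith [hdisc]
    have hql2 : (s - v) ^ 2 ≤ ℓ ^ 2 := by nlinarith [hql, sq_nonneg ℓ, mul_pos hℓ hℓ]
    have habs : |s - v| ≤ ℓ := by
      rw [abs_le]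
      constructor <;> nlinarith [hql2]
    have hsec := sector_s9 ℓ s (s - v) hℓ habs
    rw [← hu] at hsec
    have hsec2 : d * (d - v) ≤ 0 := by
      have heq : d * (d - v) = (s - u) * ((s - v) - u) := by rw [hd]; ring
      rw [heq]; exact hsec
    have hKz : K *ᵥ z = fun _ : Fin 1 => s := by
      funext j
      have hj : j = 0 := Subsingleton.elim _ _
      rw [hj, hs]
    set g := z ⬝ᵥ Pt *ᵥ bc with hg
    set a1 := z ⬝ᵥ Pt *ᵥ (A *ᵥ z) with ha1
    clear_value g a1
    have hterm1 : z ⬝ᵥ ((A + B * K)ᵀ * Pt + Pt * (A + B * K)) *ᵥ z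
        = 2 * (a1 + s * g) := by
      have hw : (A + B * K) *ᵥ z = A *ᵥ z + s • bc := by
        rw [add_mulVec, ← mulVec_mulVec, hKz, hB]
      have hL : z ⬝ᵥ ((A + B * K)ᵀ * Pt) *ᵥ z = z ⬝ᵥ Pt *ᵥ ((A + B * K) *ᵥ z) := by
        rw [← mulVec_mulVec, dotProduct_mulVec, vecMul_transpose, dot_sym hPts]
      have hR : z ⬝ᵥ (Pt * (A + B * K)) *ᵥ z = z ⬝ᵥ Pt *ᵥ ((A + B * K) *ᵥ z) := by
        rw [← mulVec_mulVec]
      rw [add_mulVec, dotProduct_add, hL, hR, hw, mulVec_add, dotProduct_add,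
        mulVec_smul, dotProduct_smul, smul_eq_mul, ← ha1, ← hg]
      ring
    have hterm2 : z ⬝ᵥ (Pt * B - Cᵀ) *ᵥ (fun _ : Fin 1 => -d) = (-d) * g - (-d) * v := by
      rw [sub_mulVec, dotProduct_sub, ← mulVec_mulVec, hB, mulVec_smul, dotProduct_smul,
        htrans C z, hfin1, ← hg, ← hv]
      simp only [smul_eq_mul]
    have hterm3 : (fun _ : Fin 1 => -d) ⬝ᵥ (Bᵀ * Pt - C) *ᵥ z = (-d) * g - (-d) * v := by
      have h1 : (Bᵀ *ᵥ (Pt *ᵥ z)) 0 = bc ⬝ᵥ (Pt *ᵥ z) := by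
        simp [mulVec, dotProduct, hbc, transpose_apply]
      rw [sub_mulVec, dotProduct_sub, ← mulVec_mulVec, hfin1, hfin1, h1,
        dot_sym hPts bc z, ← hg, ← hv]
    have hterm4 : (fun _ : Fin 1 => -d) ⬝ᵥ ((-2 : ℝ) • (1 : Matrix (Fin 1) (Fin 1) ℝ)) *ᵥ
        (fun _ : Fin 1 => -d) = -2 * d ^ 2 := by
      rw [smul_mulVec, one_mulVec, dotProduct_smul, hfin1]
      simp only [smul_eq_mul]
      ring
    set x : (Fin n ⊕ Fin 1) → ℝ := Sum.elim z (fun _ => -d) with hx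
    clear_value x
    have hM1form : x ⬝ᵥ (Matrix.fromBlocks ((A + B * K)ᵀ * Pt + Pt * (A + B * K))
        (Pt * B - Cᵀ) (Bᵀ * Pt - C) ((-2 : ℝ) • (1 : Matrix (Fin 1) (Fin 1) ℝ))) *ᵥ x
        = 2 * (a1 + s * g) + ((-d) * g - (-d) * v) + ((-d) * g - (-d) * v)
          + (-2 * d ^ 2) := by
      rw [hx, hblock, hterm1, hterm2, hterm3, hterm4]
    have hsum : ∑ i, x i ^ 2 = (∑ i, z i ^ 2) + d ^ 2 := by
      rw [hx, Fintype.sum_sum_type]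
      simp
    have hbig := hq1 x
    rw [hsum, neg_mulVec, dotProduct_neg, hM1form] at hbig
    have hinner : z ⬝ᵥ Pt *ᵥ (A *ᵥ z + B *ᵥ (fun _ => u)) = a1 + u * g := by
      rw [hB u, mulVec_add, dotProduct_add, mulVec_smul, dotProduct_smul, smul_eq_mul,
        ← ha1, ← hg]
    have hgoal2 : 2 * (a1 + u * g) ≤ -ε1 * (∑ i, z i ^ 2) := by
      have hus : u = s - d := by rw [hd]; ring
      rw [hus]
      nlinarith [hbig, hsec2, hε1, sq_nonneg d]
    show 2 * D * (z ⬝ᵥ Pt *ᵥ (A *ᵥ z + B *ᵥ (fun _ => u))) ≤ -(D * ε1) * (∑ i, z i ^ 2)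
    rw [hinner]
    nlinarith [mul_le_mul_of_nonneg_left hgoal2 hD.le]
end

section
/- Let n, n_c ∈ ℕ*, let P ∈ ℝ^{n×n} and P̄ ∈ ℝ^{(n+n_c)×(n+n_c)} be symmetric positive definite matrices, and suppose that [I_n 0] P̄ [I_n; 0] − P is negative semidefinite, where [I_n 0] ∈ ℝ^{n×(n+n_c)} and [I_n; 0] ∈ ℝ^{(n+n_c)×n} (so [I_n 0] P̄ [I_n; 0] is the upper-left n×n block of P̄). Then the ellipsoid {z ∈ ℝⁿ : zᵀPz ≤ 1} is contained in the projection onto the first n coordinates of the ellipsoid {Z ∈ ℝ^{n+n_c} : ZᵀP̄Z ≤ 1}; that is, for every z ∈ ℝⁿ with zᵀPz ≤ 1 there exists z_c ∈ ℝ^{n_c} such that the vector Z = (z, z_c) satisfies ZᵀP̄Z ≤ 1. -/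
open Matrix

theorem stmt10 (n nc : ℕ) (hn : 0 < n) (hnc : 0 < nc)
    (P : Matrix (Fin n) (Fin n) ℝ)
    (Pbar : Matrix (Fin n ⊕ Fin nc) (Fin n ⊕ Fin nc) ℝ)
    (hP : P.PosDef) (hPbar : Pbar.PosDef)
    (h : (P - Pbar.toBlocks₁₁).PosSemidef) :
    ∀ z : Fin n → ℝ, z ⬝ᵥ P.mulVec z ≤ 1 →
      ∃ zc : Fin nc → ℝ,
        (Sum.elim z zc) ⬝ᵥ Pbar.mulVec (Sum.elim z zc) ≤ 1 := by
  intro z hz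
  set A := Pbar.toBlocks₁₁ with hA
  set B := Pbar.toBlocks₁₂ with hB
  set D := Pbar.toBlocks₂₂ with hD
  have hBl : Pbar.toBlocks₂₁ = Bᴴ := by
    ext i j
    have := congrFun (congrFun hPbar.1 (Sum.inl j)) (Sum.inr i)
    simpa [conjTranspose_apply, toBlocks₂₁, toBlocks₁₂, hB] using this
  have hPbarEq : Pbar = fromBlocks A B Bᴴ D := by
    rw [← hBl, hA, hB, hD, fromBlocks_toBlocks]
  have hDpd : D.PosDef := by
    refine posDef_iff_dotProduct_mulVec.mpr ⟨?_, ?_⟩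
    · ext i j
      have := congrFun (congrFun hPbar.1 (Sum.inr j)) (Sum.inr i)
      simpa [conjTranspose_apply, toBlocks₂₂, hD] using this.symm
    · intro y hy
      have h0 : (Sum.elim (0 : Fin n → ℝ) y) ≠ 0 := by
        intro hc
        apply hy
        ext i
        exact congrFun hc (Sum.inr i)
      have := hPbar.dotProduct_mulVec_pos h0
      simpa [hPbarEq, fromBlocks_mulVec, star_trivial] using this
  haveI : Invertible D := hDpd.isUnit.invertible
  refine ⟨-((D⁻¹ * Bᴴ) *ᵥ z), ?_⟩
  have key := schur_complement_eq₂₂ A B z (-((D⁻¹ * Bᴴ) *ᵥ z)) hDpd.1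
  rw [add_neg_cancel] at key
  have hq : (Sum.elim z (-((D⁻¹ * Bᴴ) *ᵥ z))) ⬝ᵥ
      Pbar.mulVec (Sum.elim z (-((D⁻¹ * Bᴴ) *ᵥ z))) =
      z ᵥ* (A - B * D⁻¹ * Bᴴ) ⬝ᵥ z := by
    rw [hPbarEq, dotProduct_mulVec]
    simpa [star_trivial] using key
  rw [hq]
  have h1 : z ᵥ* (A - B * D⁻¹ * Bᴴ) ⬝ᵥ z ≤ z ⬝ᵥ A.mulVec z := by
    rw [vecMul_sub, sub_dotProduct, ← dotProduct_mulVec]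
    have hnn : 0 ≤ z ᵥ* (B * D⁻¹ * Bᴴ) ⬝ᵥ z := by
      have hinv : (D⁻¹).PosSemidef := hDpd.inv.posSemidef
      have := (hinv.mul_mul_conjTranspose_same B).dotProduct_mulVec_nonneg z
      simpa [star_trivial, dotProduct_mulVec] using this
    linarith
  have h2 : z ⬝ᵥ A.mulVec z ≤ z ⬝ᵥ P.mulVec z := by
    have := h.dotProduct_mulVec_nonneg z
    simp only [star_trivial, sub_mulVec, dotProduct_sub] at this
    linarith
  linarith
end

section
/- Let ℓ > 0, L > 0, k ∈ ℝ with |k| ≤ ℓ, let b ∈ L²(0,L), and let χ be the characteristic (indicator) function of the set U := { x ∈ (0,L) : |k·b(x)| > ℓ }. Then ‖ b·sat_ℓ(k) − sat_ℓ(k·b(·)) ‖₂ ≤ ℓ·‖ χ + |b|·χ ‖₂, where b·sat_ℓ(k) is the function x ↦ b(x)·sat_ℓ(k) and sat_ℓ(k·b(·)) is the function x ↦ sat_ℓ(k·b(x)). -/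
open MeasureTheory

theorem stmt14 (ℓ L : ℝ) (hℓ : 0 < ℓ) (hL : 0 < L) (k : ℝ) (hk : |k| ≤ ℓ)
    (b : ℝ → ℝ) (hb : MemLp b 2 (volume.restrict (Set.Ioo 0 L)))
    (χ : ℝ → ℝ)
    (hχ : χ = Set.indicator {x ∈ Set.Ioo 0 L | ℓ < |k * b x|} (fun _ => (1 : ℝ))) :
    eLpNorm (fun x => b x * sats ℓ k - sats ℓ (k * b x)) 2
        (volume.restrict (Set.Ioo 0 L)) ≤
      ENNReal.ofReal ℓ *
        eLpNorm (fun x => χ x + |b x| * χ x) 2 (volume.restrict (Set.Ioo 0 L)) := by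
  have hpt : ∀ᵐ x ∂(volume.restrict (Set.Ioo 0 L)),
      ‖b x * sats ℓ k - sats ℓ (k * b x)‖ ≤ ‖ℓ * (χ x + |b x| * χ x)‖ := by
    filter_upwards [ae_restrict_mem measurableSet_Ioo] with x hx
    have hsk : sats ℓ k = k := by simp [sats, hk]
    rw [hsk]
    by_cases h : |k * b x| ≤ ℓ
    · have : sats ℓ (k * b x) = k * b x := by rw [sats, if_pos h]
      have hχ0 : χ x = 0 := by
        rw [hχ]; apply Set.indicator_of_notMem
        simp only [Set.mem_setOf_eq, not_and]
        intro _; linarith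
      simp [this, hχ0, mul_comm]
    · have hχ1 : χ x = 1 := by
        rw [hχ]; apply Set.indicator_of_mem
        exact ⟨hx, lt_of_not_ge h⟩
      have hlt : ℓ < |k * b x| := lt_of_not_ge h
      have hne : |k * b x| ≠ 0 := (hℓ.trans hlt).ne'
      have : sats ℓ (k * b x) = ℓ * (k * b x) / |k * b x| := by rw [sats, if_neg h]
      rw [this, hχ1]
      set u : ℝ := ℓ * (k * b x) / |k * b x| with hu
      have h1 : |b x * k - u| ≤ |b x * k| + |u| := abs_sub _ _
      have h2 : |u| = ℓ := by
        rw [hu, abs_div, abs_mul, abs_abs, abs_of_pos hℓ, mul_div_assoc, div_self hne,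
          mul_one]
      have h3 : |b x * k| ≤ ℓ * |b x| := by
        rw [abs_mul]
        calc |b x| * |k| ≤ |b x| * ℓ := mul_le_mul_of_nonneg_left hk (abs_nonneg _)
          _ = ℓ * |b x| := mul_comm _ _
      have h4 : |ℓ * (1 + |b x| * 1)| = ℓ * (1 + |b x|) := by
        rw [mul_one, abs_of_nonneg]; positivity
      simp only [Real.norm_eq_abs]
      rw [h4]
      calc |b x * k - u| ≤ ℓ * |b x| + ℓ := by linarith
        _ = ℓ * (1 + |b x|) := by ring
  calc eLpNorm (fun x => b x * sats ℓ k - sats ℓ (k * b x)) 2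
        (volume.restrict (Set.Ioo 0 L))
      ≤ eLpNorm (fun x => ℓ * (χ x + |b x| * χ x)) 2 (volume.restrict (Set.Ioo 0 L)) :=
        eLpNorm_mono_ae hpt
    _ = ‖ℓ‖ₑ * eLpNorm (fun x => χ x + |b x| * χ x) 2 (volume.restrict (Set.Ioo 0 L)) := by
        simpa [Pi.smul_def, smul_eq_mul] using
          eLpNorm_const_smul (c := ℓ)
            (f := fun x => χ x + |b x| * χ x) (p := 2) (μ := volume.restrict (Set.Ioo 0 L))
    _ = ENNReal.ofReal ℓ *
        eLpNorm (fun x => χ x + |b x| * χ x) 2 (volume.restrict (Set.Ioo 0 L)) := by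
        congr 1
        simp [Real.enorm_eq_ofReal hℓ.le]
end

section
/- Let n ∈ ℕ*, let λ₁, …, λₙ ∈ ℝ with λ_j ≥ 0 for every j, let Λ := diag(λ₁, …, λₙ) ∈ ℝ^{n×n}, and let b ∈ ℝ^{n×1}. Then there exists K ∈ ℝ^{1×n} such that Λ + bK is Hurwitz if and only if b_j ≠ 0 for every j ∈ {1,…,n} and λ_i ≠ λ_j whenever i ≠ j. -/
open Matrix Polynomial Finset

lemma spec_det {n : ℕ} (A : Matrix (Fin n) (Fin n) ℂ) (μ : ℂ) :
    μ ∈ spectrum ℂ A ↔ (μ • (1 : Matrix (Fin n) (Fin n) ℂ) - A).det = 0 := by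
  rw [spectrum.mem_iff, Algebra.algebraMap_eq_smul_one]
  rw [← not_iff_comm, ← ne_eq, ← isUnit_iff_ne_zero]
  exact (Matrix.isUnit_iff_isUnit_det _).symm

lemma ment_lem {n : ℕ} (lam : Fin n → ℝ)
    (b : Matrix (Fin n) (Fin 1) ℝ) (K : Matrix (Fin 1) (Fin n) ℝ) (μ : ℂ) :
    ∀ l k, (μ • (1 : Matrix (Fin n) (Fin n) ℂ)
        - (Matrix.diagonal lam + b * K).map (fun x => (x : ℂ))) l k
      = (if l = k then μ - (lam l : ℂ) else 0) - (b l 0 : ℂ) * (K 0 k : ℂ) := by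
  intro l k
  simp only [Matrix.sub_apply, Matrix.smul_apply, Matrix.one_apply, Matrix.map_apply,
    Matrix.add_apply, Matrix.mul_apply, Matrix.diagonal_apply, Fin.sum_univ_one]
  push_cast [apply_ite (fun x : ℝ => (x : ℂ))]
  split <;> simp only [smul_eq_mul, mul_one, mul_zero] <;> ring

lemma single_mul_sum {n : ℕ} (i : Fin n) (g : Fin n → ℂ) :
    (∑ l, (Pi.single i (1:ℂ) : Fin n → ℂ) l * g l) = g i := by
  rw [Finset.sum_eq_single i (fun l _ hl => by simp [Pi.single_apply, hl])
    (fun h => absurd (mem_univ i) h)]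
  simp

lemma key_poly_identity {n : ℕ} (lam : Fin n → ℝ)
    (hd : Function.Injective lam) (p : ℝ[X]) (hp : p.Monic) (hdeg : p.natDegree = n) :
    (∏ j, (X - C (lam j))) +
      ∑ j, C (p.eval (lam j) * (∏ i ∈ univ.erase j, (lam j - lam i))⁻¹) *
        ∏ i ∈ univ.erase j, (X - C (lam i)) = p := by
  set q : ℝ[X] := ∏ j, (X - C (lam j)) with hq
  have hqm : q.Monic := monic_prod_of_monic _ _ fun j _ => monic_X_sub_C _
  have hqd : q.natDegree = n := by
    rw [hq, natDegree_prod _ _ (fun j _ => X_sub_C_ne_zero _)]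
    simp
  have hinj : Set.InjOn lam (univ : Finset (Fin n)) := fun a _ b _ h => hd h
  have hdlt : (p - q).degree < (#(univ : Finset (Fin n)) : ℕ) := by
    have : (p - q).degree < p.degree := by
      apply degree_sub_lt
      · rw [degree_eq_natDegree hp.ne_zero, degree_eq_natDegree hqm.ne_zero, hdeg, hqd]
      · exact hp.ne_zero
      · rw [hp.leadingCoeff, hqm.leadingCoeff]
    calc (p - q).degree < p.degree := this
      _ = ((#(univ : Finset (Fin n)) : ℕ) : WithBot ℕ) := by
          rw [degree_eq_natDegree hp.ne_zero, hdeg]; simp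
  have hinterp := Lagrange.eq_interpolate hinj hdlt
  have hvals : ∀ j : Fin n, (p - q).eval (lam j) = p.eval (lam j) := by
    intro j
    have : q.eval (lam j) = 0 := by
      rw [hq, eval_prod]
      exact Finset.prod_eq_zero (mem_univ j) (by simp)
    simp [this]
  have hbasis : ∀ j : Fin n, Lagrange.basis univ lam j =
      C ((∏ i ∈ univ.erase j, (lam j - lam i))⁻¹) * ∏ i ∈ univ.erase j, (X - C (lam i)) := by
    intro j
    rw [Lagrange.basis]
    rw [show (fun i => Lagrange.basisDivisor (lam j) (lam i)) = fun i =>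
      C ((lam j - lam i)⁻¹) * (X - C (lam i)) from rfl]
    rw [Finset.prod_mul_distrib, ← map_prod, ← Finset.prod_inv_distrib]
  have hpq : p - q = ∑ j, C (p.eval (lam j)) *
      (C ((∏ i ∈ univ.erase j, (lam j - lam i))⁻¹) * ∏ i ∈ univ.erase j, (X - C (lam i))) := by
    rw [hinterp, Lagrange.interpolate_apply]
    refine Finset.sum_congr rfl fun j _ => ?_
    rw [hvals j, hbasis j]
  rw [eq_comm, ← sub_eq_iff_eq_add']
  rw [hpq]
  refine Finset.sum_congr rfl fun j _ => ?_
  rw [← mul_assoc, ← C_mul]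

/-- A real square matrix is Hurwitz if all its complex eigenvalues have negative real part. -/
def IsHurwitz {n : ℕ} (H : Matrix (Fin n) (Fin n) ℝ) : Prop :=
  ∀ μ ∈ spectrum ℂ (H.map (fun x => (x : ℂ))), μ.re < 0

theorem stmt18 (n : ℕ) (hn : 0 < n) (lam : Fin n → ℝ) (hlam : ∀ j, 0 ≤ lam j)
    (b : Matrix (Fin n) (Fin 1) ℝ) :
    (∃ K : Matrix (Fin 1) (Fin n) ℝ, IsHurwitz (Matrix.diagonal lam + b * K)) ↔
      ((∀ j, b j 0 ≠ 0) ∧ ∀ i j, i ≠ j → lam i ≠ lam j) := by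
  constructor
  · rintro ⟨K, hK⟩
    have ment := ment_lem lam b K
    have hspec : ∀ μ : ℂ, (∃ w : Fin n → ℂ, w ≠ 0 ∧
        w ᵥ* (μ • 1 - (Matrix.diagonal lam + b * K).map (fun x => (x : ℂ))) = 0) →
        μ ∈ spectrum ℂ ((Matrix.diagonal lam + b * K).map (fun x => (x : ℂ))) := by
      intro μ hw
      rw [spec_det]
      exact (Matrix.exists_vecMul_eq_zero_iff).mp hw
    have hb : ∀ j, b j 0 ≠ 0 := by
      intro j hbj
      have hker : (Pi.single j (1:ℂ) : Fin n → ℂ) ᵥ* ((lam j : ℂ) • 1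
          - (Matrix.diagonal lam + b * K).map (fun x => (x : ℂ))) = 0 := by
        funext k
        simp only [Matrix.vecMul, dotProduct, Pi.zero_apply]
        rw [single_mul_sum]
        rw [ment (lam j) j k]
        simp [hbj]
      have hwne : (Pi.single j (1:ℂ) : Fin n → ℂ) ≠ 0 := fun h =>
        one_ne_zero (α := ℂ) (by simpa using congrFun h j)
      have hmem := hspec _ ⟨_, hwne, hker⟩
      have := hK _ hmem
      simp only [Complex.ofReal_re] at this
      exact absurd this (not_lt.mpr (hlam j))
    refine ⟨hb, ?_⟩
    intro i j hij heq
    set w : Fin n → ℂ := fun l => (b j 0 : ℂ) * (Pi.single i (1:ℂ) : Fin n → ℂ) l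
        - (b i 0 : ℂ) * (Pi.single j (1:ℂ) : Fin n → ℂ) l with hwdef
    have hwne : w ≠ 0 := by
      intro h
      have := congrFun h i
      simp [hwdef, Pi.single_apply, hij, Ne.symm hij] at this
      exact hb j (by exact_mod_cast this)
    have hker : w ᵥ* ((lam i : ℂ) • 1
        - (Matrix.diagonal lam + b * K).map (fun x => (x : ℂ))) = 0 := by
      funext k
      simp only [Matrix.vecMul, dotProduct, Pi.zero_apply, hwdef, sub_mul, mul_assoc,
        Finset.sum_sub_distrib, ← Finset.mul_sum, single_mul_sum]
      rw [ment (lam i) i k, ment (lam i) j k]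
      split_ifs with h1 h2 <;> push_cast [heq] <;> ring_nf <;> simp_all <;> ring
    have hmem := hspec _ ⟨w, hwne, hker⟩
    have := hK _ hmem
    simp only [Complex.ofReal_re] at this
    exact absurd this (not_lt.mpr (hlam i))
  · rintro ⟨hb, hd⟩
    have hinj : Function.Injective lam := by
      intro i j h
      by_contra hij
      exact hd i j hij h
    set p : ℝ[X] := ∏ k : Fin n, (X + C ((k : ℕ) + 1 : ℝ)) with hpdef
    have hpm : p.Monic := monic_prod_of_monic _ _ fun k _ => monic_X_add_C _
    have hpd : p.natDegree = n := by
      rw [hpdef, natDegree_prod _ _ (fun k _ => (monic_X_add_C _).ne_zero)]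
      have h1 : ∀ k : Fin n, (X + C ((k:ℕ)+1:ℝ)).natDegree = 1 := fun k => natDegree_X_add_C _
      simp only [h1]
      simp
    have hpe : ∀ j, 0 < p.eval (lam j) := by
      intro j
      rw [hpdef, eval_prod]
      apply Finset.prod_pos
      intro k _
      simp only [eval_add, eval_X, eval_C]
      have := hlam j; positivity
    set w : Fin n → ℝ := fun j =>
      p.eval (lam j) * (∏ i ∈ univ.erase j, (lam j - lam i))⁻¹ with hwdef
    have hw0 : ∀ j, w j ≠ 0 := by
      intro j
      have hprod : (∏ i ∈ univ.erase j, (lam j - lam i)) ≠ 0 := by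
        apply Finset.prod_ne_zero_iff.mpr
        intro i hi
        exact sub_ne_zero_of_ne (hd j i (Ne.symm (Finset.mem_erase.mp hi).1))
      exact mul_ne_zero (ne_of_gt (hpe j)) (inv_ne_zero hprod)
    refine ⟨fun _ j => - w j / b j 0, ?_⟩
    set K : Matrix (Fin 1) (Fin n) ℝ := fun _ j => - w j / b j 0 with hKdef
    intro μ hμ
    by_contra hre
    push_neg at hre
    have hPne : (∏ k : Fin n, (μ + ((k : ℕ) + 1 : ℝ))) ≠ 0 := by
      apply Finset.prod_ne_zero_iff.mpr
      intro k _ h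
      have h1 : (μ + ((k : ℕ) + 1 : ℝ)).re = 0 := by rw [h]; simp
      simp only [Complex.add_re, Complex.ofReal_re] at h1
      have hk : (0:ℝ) < (k : ℕ) + 1 := by positivity
      linarith
    -- scalar identity over ℂ
    have e1 : ∀ s : Finset (Fin n), (aeval μ) (∏ i ∈ s, (X - C (lam i)))
        = ∏ i ∈ s, (μ - (lam i : ℂ)) := by
      intro s
      rw [_root_.map_prod]
      exact Finset.prod_congr rfl fun i _ => by simp
    have e2 : (aeval μ) p = ∏ k : Fin n, (μ + ((k : ℕ) + 1 : ℝ)) := by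
      rw [hpdef, _root_.map_prod]
      refine Finset.prod_congr rfl fun k _ => by push_cast; simp
    have hkey : (∏ j, (μ - (lam j : ℂ)))
        + ∑ j, (w j : ℂ) * ∏ i ∈ univ.erase j, (μ - (lam i : ℂ))
        = ∏ k : Fin n, (μ + ((k : ℕ) + 1 : ℝ)) := by
      have h2 := congrArg (aeval μ) (key_poly_identity lam hinj p hpm hpd)
      simp only [map_add, map_sum, _root_.map_mul, aeval_C, e1, e2,
        Complex.coe_algebraMap] at h2
      simp only [← Complex.ofReal_mul] at h2
      exact h2
    -- get kernel vector
    rw [spec_det] at hμ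
    obtain ⟨v, hvne, hv⟩ := (Matrix.exists_mulVec_eq_zero_iff).mpr hμ
    have ment := ment_lem lam b K μ
    set α : ℂ := ∑ l, (K 0 l : ℂ) * v l with hαdef
    have heqs : ∀ i, (μ - (lam i : ℂ)) * v i = (b i 0 : ℂ) * α := by
      intro i
      have h0 := congrFun hv i
      simp only [Matrix.mulVec, dotProduct, Pi.zero_apply, ment, sub_mul, ite_mul, zero_mul,
        Finset.sum_sub_distrib, Finset.sum_ite_eq, mem_univ, if_true, mul_assoc,
        ← Finset.mul_sum] at h0
      rw [← hαdef] at h0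
      linear_combination h0
    have hKb : ∀ j, (K 0 j : ℂ) * (b j 0 : ℂ) = -(w j : ℂ) := by
      intro j
      have hbj : (b j 0 : ℂ) ≠ 0 := by exact_mod_cast hb j
      rw [hKdef]
      push_cast
      field_simp
    have hα0 : α = 0 := by
      have hsum : α * ∏ j, (μ - (lam j : ℂ))
          = - α * ∑ j, (w j : ℂ) * ∏ i ∈ univ.erase j, (μ - (lam i : ℂ)) := by
        rw [hαdef, Finset.sum_mul, Finset.mul_sum]
        refine Finset.sum_congr rfl fun j _ => ?_
        rw [← Finset.mul_prod_erase _ _ (mem_univ j)]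
        have h1 : (K 0 j : ℂ) * v j * ((μ - (lam j : ℂ)) * ∏ i ∈ univ.erase j, (μ - (lam i : ℂ)))
            = (K 0 j : ℂ) * ((μ - (lam j : ℂ)) * v j) * ∏ i ∈ univ.erase j, (μ - (lam i : ℂ)) := by
          ring
        rw [h1, heqs j, ← hαdef]
        have := hKb j
        calc (K 0 j:ℂ) * ((b j 0:ℂ) * α) * ∏ i ∈ univ.erase j, (μ - (lam i : ℂ))
            = ((K 0 j:ℂ) * (b j 0:ℂ)) * α * ∏ i ∈ univ.erase j, (μ - (lam i : ℂ)) := by ring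
          _ = -α * ((w j:ℂ) * ∏ i ∈ univ.erase j, (μ - (lam i : ℂ))) := by rw [this]; ring
      have hαP : α * (∏ k : Fin n, (μ + ((k : ℕ) + 1 : ℝ))) = 0 := by
        have := hkey
        linear_combination hsum - α * this
      exact (mul_eq_zero.mp hαP).resolve_right hPne
    have hv0 : v = 0 := by
      funext i
      by_cases hμi : μ = (lam i : ℂ)
      · have hvl : ∀ l, l ≠ i → v l = 0 := by
          intro l hl
          have h2 := heqs l
          rw [hα0, mul_zero] at h2
          have h3 : μ - (lam l : ℂ) ≠ 0 := by
            rw [hμi]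
            rw [sub_ne_zero]
            exact_mod_cast fun h => hl (hinj (by exact_mod_cast h)).symm
          exact (mul_eq_zero.mp h2).resolve_left h3
        have h4 : α = (K 0 i : ℂ) * v i := by
          rw [hαdef, Finset.sum_eq_single i (fun l _ hl => by rw [hvl l hl, mul_zero])
            (fun h => absurd (mem_univ i) h)]
        have hKne : (K 0 i : ℂ) ≠ 0 := by
          rw [hKdef]
          push_cast
          exact div_ne_zero (by exact_mod_cast neg_ne_zero.mpr (hw0 i))
            (by exact_mod_cast hb i)
        rw [hα0] at h4
        exact ((mul_eq_zero.mp h4.symm).resolve_left hKne)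
      · have h2 := heqs i
        rw [hα0, mul_zero] at h2
        exact (mul_eq_zero.mp h2).resolve_left (sub_ne_zero.mpr hμi)
    exact hvne hv0
end
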